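/- arXiv:math/0611695 — 3 statements merged into one kernel-verified Lean document; each statement's English description precedes it below -/
import Mathlib

section
/- Let W_k (k ∈ Z) be i.i.d. elements of a Polish space W, X_k = φ(W_k) i.i.d. real, non-arithmetic, with mean μ > 0 and finite variance, S_n = X_1 + ... + X_n. Given 0 < α < 1, set β = (1 − α²)/α. Then there is a constant K_1 = K_{1,α} such that Σ_{n=0}^{∞} P(W*_n ∈ B, a < S_n ≤ a + b) ≤ K_1 (1 + b) P(W*_0 ∈ B)^α for all measurable B in the product σ-algebra on W^Z and all 0 ≤ a, b < ∞, where W*_n = (..., W_{n−1}, W_n, W_{n+1}, ...). -/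
open MeasureTheory ProbabilityTheory Filter Finset

section shift
variable {Ω : Type*} [MeasureSpace Ω] [IsProbabilityMeasure (ℙ : Measure Ω)]
variable {𝕎 : Type*} [MeasurableSpace 𝕎]
variable {W : ℤ → Ω → 𝕎}

lemma prod_marg (hWmeas : ∀ k, Measurable (W k))
    (hWindep : iIndepFun W ℙ)
    (hWid : ∀ k, IdentDistrib (W k) (W 0) ℙ ℙ)
    {ι : Type*} [Nonempty ι] (s : Finset ι) (e : ι → ℤ) (he : Function.Injective e)
    (A : ι → Set 𝕎) (hA : ∀ i, MeasurableSet (A i)) :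
    ℙ (⋂ j ∈ s, (W (e j)) ⁻¹' (A j)) = ∏ j ∈ s, (Measure.map (W 0) ℙ) (A j) := by
  classical
  have hinv : ∀ j : ι, Function.invFun e (e j) = j :=
    Function.leftInverse_invFun he
  set g : ℤ → Set Ω := fun i => (W i) ⁻¹' (A (Function.invFun e i)) with hg
  have hset : (⋂ j ∈ s, (W (e j)) ⁻¹' (A j)) = ⋂ i ∈ s.image e, g i := by
    ext x
    simp only [Set.mem_iInter, Finset.mem_image]
    constructor
    · rintro h i ⟨j, hj, rfl⟩
      simpa [hg, hinv j] using h j hj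
    · intro h j hj
      have := h (e j) ⟨j, hj, rfl⟩
      simpa [hg, hinv j] using this
  rw [hset]
  have hprod := (hWindep.meas_biInter (S := s.image e) (s := g)) ?_
  · rw [hprod, Finset.prod_image (fun a ha b hb hab => he hab)]
    refine Finset.prod_congr rfl fun j hj => ?_
    have : g (e j) = (W (e j)) ⁻¹' (A j) := by simp [hg, hinv j]
    rw [this, ← Measure.map_apply (hWmeas (e j)) (hA j), (hWid (e j)).map_eq]
  · intro i _
    exact ⟨A (Function.invFun e i), hA _, rfl⟩

lemma law_shift (hWmeas : ∀ k, Measurable (W k))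
    (hWindep : iIndepFun W ℙ)
    (hWid : ∀ k, IdentDistrib (W k) (W 0) ℙ ℙ)
    {ι : Type*} [Countable ι] [Nonempty ι] (e₁ e₂ : ι → ℤ)
    (h₁ : Function.Injective e₁) (h₂ : Function.Injective e₂) :
    Measure.map (fun ω (j : ι) => W (e₁ j) ω) ℙ
      = Measure.map (fun ω (j : ι) => W (e₂ j) ω) ℙ := by
  classical
  have hm : ∀ e : ι → ℤ, Measurable (fun ω (j : ι) => W (e j) ω) := fun e =>
    measurable_pi_lambda _ fun j => hWmeas _
  have key : ∀ (e : ι → ℤ), Function.Injective e → ∀ (s : Finset ι)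
      (S : Set (∀ j : s, 𝕎)), MeasurableSet S →
      Measure.map (fun ω (j : ι) => W (e j) ω) ℙ (cylinder s S)
        = Measure.pi (fun _ : s => Measure.map (W 0) ℙ) S := by
    intro e he s S hS
    rw [Measure.map_apply (hm e) (hS.cylinder)]
    have hpre : (fun ω (j : ι) => W (e j) ω) ⁻¹' (cylinder s S)
        = (fun ω (j : s) => W (e (j : ι)) ω) ⁻¹' S := rfl
    rw [hpre, ← Measure.map_apply (measurable_pi_lambda _ fun j => hWmeas _) hS]
    have hfin : Measure.pi (fun _ : s => Measure.map (W 0) ℙ)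
        = Measure.map (fun ω (j : s) => W (e (j : ι)) ω) ℙ := by
      refine Measure.pi_eq fun A hA => ?_
      rw [Measure.map_apply (measurable_pi_lambda _ fun j => hWmeas _)
        (MeasurableSet.univ_pi hA)]
      set A' : ι → Set 𝕎 := fun i => if h : i ∈ s then A ⟨i, h⟩ else Set.univ with hA'
      have hA'm : ∀ i, MeasurableSet (A' i) := by
        intro i
        by_cases h : i ∈ s <;> simp [hA', h, hA]
      have hpre2 : (fun ω (j : s) => W (e (j : ι)) ω) ⁻¹' (Set.univ.pi A)
          = ⋂ j ∈ s, (W (e j)) ⁻¹' (A' j) := by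
        ext x
        simp only [Set.mem_preimage, Set.mem_univ_pi, Set.mem_iInter]
        constructor
        · intro h j hj
          have := h ⟨j, hj⟩
          simpa [hA', hj] using this
        · intro h j
          have := h (j : ι) j.2
          simpa [hA', j.2] using this
      rw [hpre2, prod_marg hWmeas hWindep hWid s e he A' hA'm]
      rw [← Finset.prod_coe_sort s (fun j => (Measure.map (W 0) ℙ) (A' j))]
      refine Finset.prod_congr rfl fun j _ => ?_
      simp [hA', j.2]
    rw [hfin]
  have h1 : IsProbabilityMeasure (Measure.map (fun ω (j : ι) => W (e₁ j) ω) ℙ) :=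
    Measure.isProbabilityMeasure_map (hm e₁).aemeasurable
  have h2 : IsProbabilityMeasure (Measure.map (fun ω (j : ι) => W (e₂ j) ω) ℙ) :=
    Measure.isProbabilityMeasure_map (hm e₂).aemeasurable
  refine ext_of_generate_finite (measurableCylinders (fun _ : ι => 𝕎))
    generateFrom_measurableCylinders.symm isPiSystem_measurableCylinders
    (fun t ht => ?_) (by simp)
  obtain ⟨s, S, hS, rfl⟩ := (mem_measurableCylinders t).1 ht
  rw [key e₁ h₁ s S hS, key e₂ h₂ s S hS]

end shift

lemma comb (L : ℕ) : ∀ (k : ℕ) (A : Set ℕ),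
    (¬ ∃ c : Fin (k + 1) → ℕ, (∀ i j : Fin (k + 1), i < j → c i + L < c j) ∧ ∀ i, c i ∈ A) →
    ∑' n, A.indicator (fun _ => (1 : ENNReal)) n ≤ (k : ENNReal) * (L + 1) := by
  intro k
  induction k with
  | zero =>
      intro A hA
      have : A = ∅ := by
        by_contra h
        obtain ⟨x, hx⟩ := Set.nonempty_iff_ne_empty.2 h
        refine hA ⟨fun _ => x, fun i j hij => ?_, fun _ => hx⟩
        · have hi := i.isLt; have hj := j.isLt
          rw [Fin.lt_def] at hij; omega
      simp [this]
  | succ k ih =>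
      intro A hA
      by_cases hne : A.Nonempty
      · set t₀ := sInf A with ht₀
        have ht₀A : t₀ ∈ A := Nat.sInf_mem hne
        set A' : Set ℕ := {n | n ∈ A ∧ t₀ + L < n} with hA'
        have hA'chain : ¬ ∃ c : Fin (k + 1) → ℕ,
            (∀ i j : Fin (k + 1), i < j → c i + L < c j) ∧ ∀ i, c i ∈ A' := by
          rintro ⟨c, hc1, hc2⟩
          have hlt : ∀ i : Fin (k + 1 + 1), (i : ℕ) - 1 < k + 1 := by
            intro i; have := i.isLt; omega
          refine hA ⟨fun i => if 0 < (i : ℕ) then c ⟨(i : ℕ) - 1, hlt i⟩ else t₀, ?_, ?_⟩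
          · intro i j hij
            rw [Fin.lt_def] at hij
            by_cases hi : 0 < (i : ℕ)
            · have hj : 0 < (j : ℕ) := by omega
              simp only [if_pos hi, if_pos hj]
              refine hc1 _ _ ?_
              rw [Fin.lt_def]; simp; omega
            · have hj : 0 < (j : ℕ) := by omega
              simp only [if_neg hi, if_pos hj]
              exact (hc2 _).2
          · intro i
            by_cases hi : 0 < (i : ℕ)
            · simp only [if_pos hi]
              exact (hc2 _).1
            · simp only [if_neg hi]
              exact ht₀A
        have hsub : A ⊆ Set.Icc t₀ (t₀ + L) ∪ A' := by
          intro n hn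
          rcases le_or_gt n (t₀ + L) with h | h
          · exact Or.inl ⟨Nat.sInf_le hn, h⟩
          · exact Or.inr ⟨hn, h⟩
        have hmono : ∀ n, A.indicator (fun _ => (1 : ENNReal)) n ≤
            (Set.Icc t₀ (t₀ + L)).indicator (fun _ => (1 : ENNReal)) n +
            A'.indicator (fun _ => (1 : ENNReal)) n := by
          intro n
          by_cases hn : n ∈ A
          · rcases hsub hn with h | h
            · simp [Set.indicator_of_mem, hn, h]
            · simp only [Set.indicator_of_mem hn, Set.indicator_of_mem h]
              exact le_add_self
          · simp [Set.indicator_of_notMem, hn]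
        calc ∑' n, A.indicator (fun _ => (1 : ENNReal)) n
            ≤ ∑' n, ((Set.Icc t₀ (t₀ + L)).indicator (fun _ => (1 : ENNReal)) n +
              A'.indicator (fun _ => (1 : ENNReal)) n) := ENNReal.tsum_le_tsum hmono
          _ = (∑' n, (Set.Icc t₀ (t₀ + L)).indicator (fun _ => (1 : ENNReal)) n) +
              ∑' n, A'.indicator (fun _ => (1 : ENNReal)) n := ENNReal.tsum_add
          _ ≤ (L + 1 : ENNReal) + (k : ENNReal) * (L + 1) := by
              gcongr
              · -- tsum of indicator of Icc
                rw [tsum_eq_sum (s := Finset.Icc t₀ (t₀ + L))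
                    (fun n hn => Set.indicator_of_notMem (by simpa using hn) _)]
                calc ∑ n ∈ Finset.Icc t₀ (t₀ + L), (Set.Icc t₀ (t₀ + L)).indicator
                      (fun _ => (1 : ENNReal)) n
                    ≤ ∑ _n ∈ Finset.Icc t₀ (t₀ + L), (1 : ENNReal) := by
                      refine Finset.sum_le_sum fun n _ => ?_
                      by_cases h : n ∈ Set.Icc t₀ (t₀ + L) <;> simp [h]
                  _ = (L + 1 : ENNReal) := by
                      have hcard : (Finset.Icc t₀ (t₀ + L)).card = L + 1 := by
                        rw [Nat.card_Icc]; omega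
                      rw [Finset.sum_const, hcard]
                      simp [nsmul_eq_mul]
              · exact ih A' hA'chain
          _ = ((k : ENNReal) + 1) * (L + 1) := by ring
          _ = ((k + 1 : ℕ) : ENNReal) * (L + 1) := by push_cast; ring
      · rw [Set.not_nonempty_iff_eq_empty] at hne
        simp [hne]

lemma iSup_rpow_of_monotone (f : ℕ → ENNReal) (hf : Monotone f) (q : ℝ) (hq : 0 < q) :
    (⨆ n, f n) ^ q = ⨆ n, (f n) ^ q := by
  have h1 : Tendsto (fun n => (f n) ^ q) atTop (nhds ((⨆ n, f n) ^ q)) :=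
    (ENNReal.continuous_rpow_const.tendsto _).comp (tendsto_atTop_iSup hf)
  have h2 : Tendsto (fun n => (f n) ^ q) atTop (nhds (⨆ n, (f n) ^ q)) :=
    tendsto_atTop_iSup fun a b hab => ENNReal.rpow_le_rpow (hf hab) hq.le
  exact tendsto_nhds_unique h1 h2

lemma lp_sum_le {Ω' : Type*} [MeasurableSpace Ω'] (μ : Measure Ω') (f : ℕ → Ω' → ENNReal)
    (hf : ∀ k, Measurable (f k)) (q : ℝ) (hq : 1 ≤ q) (N : ℕ) :
    (∫⁻ ω, (∑ k ∈ range N, f k ω) ^ q ∂μ) ^ (1 / q)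
      ≤ ∑ k ∈ range N, (∫⁻ ω, (f k ω) ^ q ∂μ) ^ (1 / q) := by
  have hq0 : (0:ℝ) < q := lt_of_lt_of_le one_pos hq
  induction N with
  | zero =>
      simp only [Finset.range_zero, Finset.sum_empty]
      rw [ENNReal.zero_rpow_of_pos hq0, lintegral_zero, ENNReal.zero_rpow_of_pos (by positivity : (0:ℝ) < 1/q)]
  | succ N ih =>
      have hsum : ∀ ω, ∑ k ∈ range (N + 1), f k ω
          = ((fun ω => ∑ k ∈ range N, f k ω) + f N) ω := by
        intro ω; simp [Finset.sum_range_succ]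
      calc (∫⁻ ω, (∑ k ∈ range (N + 1), f k ω) ^ q ∂μ) ^ (1 / q)
          = (∫⁻ ω, (((fun ω => ∑ k ∈ range N, f k ω) + f N) ω) ^ q ∂μ) ^ (1 / q) := by
            congr 1; exact lintegral_congr fun ω => by rw [hsum ω]
        _ ≤ (∫⁻ ω, ((∑ k ∈ range N, f k ω)) ^ q ∂μ) ^ (1 / q)
              + (∫⁻ ω, (f N ω) ^ q ∂μ) ^ (1 / q) := by
            exact ENNReal.lintegral_Lp_add_le
              (Finset.measurable_sum _ fun k _ => hf k).aemeasurable (hf N).aemeasurable hq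
        _ ≤ (∑ k ∈ range N, (∫⁻ ω, (f k ω) ^ q ∂μ) ^ (1 / q))
              + (∫⁻ ω, (f N ω) ^ q ∂μ) ^ (1 / q) := by gcongr
        _ = ∑ k ∈ range (N + 1), (∫⁻ ω, (f k ω) ^ q ∂μ) ^ (1 / q) := by
            rw [Finset.sum_range_succ]
/-- (Lemma 2, first part.) For i.i.d. `W k` (k ∈ ℤ) in a Polish space,
`X k = φ(W k)` i.i.d., non-arithmetic, mean `μ > 0`, finite variance, and `0 < α < 1`,
there is a constant `K₁ = K_{1,α}` such that
`∑ₙ P(W*_n ∈ B, a < S_n ≤ a + b) ≤ K₁ (1 + b) P(W*_0 ∈ B)^α`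
for all measurable `B ⊆ 𝕎^ℤ` and all `0 ≤ a, b`, where `(W*_n)_j = W_{n+j}`. -/
theorem statement9
    {Ω : Type*} [MeasureSpace Ω] [IsProbabilityMeasure (ℙ : Measure Ω)]
    {𝕎 : Type*} [MeasurableSpace 𝕎] [StandardBorelSpace 𝕎]
    (W : ℤ → Ω → 𝕎) (hWmeas : ∀ k, Measurable (W k))
    (hWindep : iIndepFun W ℙ)
    (hWid : ∀ k, IdentDistrib (W k) (W 0) ℙ ℙ)
    (φ : 𝕎 → ℝ) (hφ : Measurable φ)
    (μ : ℝ) (hμ : 0 < μ) (hmean : ∫ ω, φ (W 1 ω) ∂ℙ = μ)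
    (hvar : Integrable (fun ω => (φ (W 1 ω)) ^ 2) ℙ)
    (hnonarith : ¬ ∃ c > 0, ∀ᵐ ω ∂ℙ, ∃ k : ℤ, φ (W 1 ω) = k * c)
    (S : ℕ → Ω → ℝ) (hS : ∀ n ω, S n ω = ∑ k ∈ Finset.Icc 1 n, φ (W k ω))
    (Wstar : ℕ → Ω → ℤ → 𝕎) (hWstar : ∀ n ω j, Wstar n ω j = W (n + j) ω)
    (α : ℝ) (hα : 0 < α) (hα' : α < 1) :
    ∃ K₁ : ℝ, ∀ B : Set (ℤ → 𝕎), MeasurableSet B → ∀ a b : ℝ, 0 ≤ a → 0 ≤ b →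
      ∑' n : ℕ, (ℙ {ω | Wstar n ω ∈ B ∧ a < S n ω ∧ S n ω ≤ a + b}).toReal ≤
        K₁ * (1 + b) * (ℙ {ω | Wstar 0 ω ∈ B}).toReal ^ α := by
  classical
  set q : ℝ := (1 - α)⁻¹ with hqdef
  have hαlt : (0:ℝ) < 1 - α := by linarith
  have hq0 : (0:ℝ) < q := by positivity
  have hq1 : (1:ℝ) ≤ q := by
    rw [hqdef]
    rw [le_inv_comm₀ one_pos hαlt]
    linarith
  have h1q : 1 / q = 1 - α := by rw [hqdef, one_div, inv_inv]
  set X : ℕ → Ω → ℝ := fun j ω => φ (W (-(j : ℤ)) ω) with hX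
  set S' : ℕ → Ω → ℝ := fun n ω => ∑ j ∈ range n, X j ω with hS'def
  have hXmeas : ∀ j, Measurable (X j) := fun j => hφ.comp (hWmeas _)
  have hS'meas : ∀ n, Measurable (S' n) := fun n => Finset.measurable_sum _ fun j _ => hXmeas j
  obtain ⟨L₀, hL₀⟩ : ∃ L₀ : ℕ, ℙ (⋃ n, ⋃ (_ : L₀ ≤ n), {ω | 2 * S' n ω ≤ (n:ℝ) * μ}) ≤ 2⁻¹ := by
    have hid1 : ∀ k : ℤ, IdentDistrib (fun ω => φ (W k ω)) (fun ω => φ (W 0 ω)) ℙ ℙ :=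
      fun k => (hWid k).comp hφ
    have hint1 : Integrable (fun ω => φ (W 1 ω)) ℙ := by
      refine ((integrable_const (1:ℝ)).add hvar).mono'
        (hφ.comp (hWmeas 1)).aestronglyMeasurable ?_
      refine Filter.Eventually.of_forall fun ω => ?_
      simp only [Real.norm_eq_abs, Pi.add_apply]
      nlinarith [sq_nonneg (|φ (W 1 ω)| - 1), sq_abs (φ (W 1 ω)), abs_nonneg (φ (W 1 ω))]
    have hintX : Integrable (X 0) ℙ := by
      have : X 0 = fun ω => φ (W 0 ω) := by
        funext ω; simp [hX]
      rw [this]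
      exact (hid1 1).integrable_iff.1 hint1
    have hmeanX : ∫ ω, X 0 ω ∂ℙ = μ := by
      have h0 : X 0 = fun ω => φ (W 0 ω) := by funext ω; simp [hX]
      rw [h0, ← (hid1 1).integral_eq]
      exact hmean
    have hpind : Pairwise (Function.onFun (IndepFun · · ℙ) X) := by
      intro i j hij
      have hne : -(i : ℤ) ≠ -(j : ℤ) := by
        intro h
        exact hij (Nat.cast_injective (neg_injective h))
      exact (hWindep.indepFun hne).comp hφ hφ
    have hidX : ∀ i, IdentDistrib (X i) (X 0) ℙ ℙ := by
      intro i
      have h1 : IdentDistrib (X i) (fun ω => φ (W 0 ω)) ℙ ℙ := hid1 (-(i:ℤ))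
      have h0 : X 0 = fun ω => φ (W 0 ω) := by funext ω; simp [hX]
      rw [h0]
      exact h1
    have hSLLN := strong_law_ae X hintX hpind hidX
    rw [hmeanX] at hSLLN
    set Gev : ℕ → Set Ω := fun L => ⋃ n, ⋃ (_ : L ≤ n), {ω | 2 * S' n ω ≤ (n:ℝ) * μ} with hGev
    have hGevMeas : ∀ L, MeasurableSet (Gev L) := fun L =>
      MeasurableSet.iUnion fun n => MeasurableSet.iUnion fun _ =>
        measurableSet_le (by fun_prop) (by fun_prop)
    have hGevAnti : Antitone Gev := by
      intro L1 L2 h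
      refine Set.iUnion_mono fun n => ?_
      exact Set.iUnion_mono' fun h2 => ⟨le_trans h h2, le_rfl⟩
    have hInter : ℙ (⋂ L, Gev L) = 0 := by
      refine measure_mono_null ?_ (ae_iff.1 hSLLN)
      intro ω hω
      simp only [Set.mem_setOf_eq]
      intro htend
      have hev : ∀ᶠ n : ℕ in atTop, μ / 2 < (n:ℝ)⁻¹ • S' n ω := by
        refine htend.eventually_const_lt ?_
        linarith
      obtain ⟨N, hN⟩ := (hev.and (eventually_ge_atTop 1)).exists_forall_of_atTop
      have hωN := Set.mem_iInter.1 hω N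
      simp only [hGev, Set.mem_iUnion, Set.mem_setOf_eq] at hωN
      obtain ⟨n, hn1, hn2⟩ := hωN
      obtain ⟨hlt, hn1'⟩ := hN n hn1
      have hnpos : (0:ℝ) < n := by exact_mod_cast hn1'
      rw [smul_eq_mul] at hlt
      have h2 : (n:ℝ) * (μ / 2) < (n:ℝ) * ((n:ℝ)⁻¹ * S' n ω) :=
        mul_lt_mul_of_pos_left hlt hnpos
      rw [← mul_assoc, mul_inv_cancel₀ hnpos.ne', one_mul] at h2
      linarith
    have htend := tendsto_measure_iInter_atTop (μ := (ℙ : Measure Ω))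
      (fun L => (hGevMeas L).nullMeasurableSet) hGevAnti ⟨0, measure_ne_top _ _⟩
    rw [hInter] at htend
    have := htend.eventually_lt_const (show (0:ENNReal) < 2⁻¹ by norm_num)
    obtain ⟨L₀, hL₀⟩ := this.exists
    exact ⟨L₀, le_of_lt hL₀⟩
  set r : ENNReal := (2⁻¹ : ENNReal) ^ (1 / q) with hrdef
  have hrlt : r < 1 :=
    ENNReal.rpow_lt_one (by norm_num) (by positivity)
  set cG : ENNReal := (1 - r)⁻¹ with hcGdef
  have hcGne : cG ≠ ⊤ := by
    rw [hcGdef, ENNReal.inv_ne_top]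
    exact (tsub_pos_of_lt hrlt).ne'
  refine ⟨((L₀:ℝ) + 2 + 2 / μ) * cG.toReal, ?_⟩
  intro B hB a b ha hb
  set Lb : ℕ := L₀ + ⌈2 * b / μ⌉₊ with hLbdef
  -- visit sets
  set Vis : ℕ → Set Ω := fun n => {ω | a < S' n ω ∧ S' n ω ≤ a + b} with hVisdef
  have hVismeas : ∀ n, MeasurableSet (Vis n) :=
    fun n => (measurableSet_lt measurable_const (hS'meas n)).inter
      (measurableSet_le (hS'meas n) measurable_const)
  -- chain events
  set Hc : ℕ → Set Ω := fun k => ⋃ (c : Fin (k+1) → ℕ),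
    ⋃ (_ : ∀ i j : Fin (k+1), i < j → c i + Lb < c j), ⋂ i, Vis (c i) with hHcdef
  have hHcmem : ∀ k ω, ω ∈ Hc k ↔ ∃ c : Fin (k+1) → ℕ,
      (∀ i j : Fin (k+1), i < j → c i + Lb < c j) ∧ ∀ i, ω ∈ Vis (c i) := by
    intro k ω
    simp [hHcdef, Set.mem_iUnion, Set.mem_iInter]
  have hHcmeas : ∀ k, MeasurableSet (Hc k) := by
    intro k
    exact MeasurableSet.iUnion fun c => MeasurableSet.iUnion fun _ =>
      MeasurableSet.iInter fun i => hVismeas _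
  set CE : ℕ → ℕ → Set Ω := fun k t => ⋃ (c : Fin (k+1) → ℕ),
    ⋃ (_ : (∀ i j : Fin (k+1), i < j → c i + Lb < c j) ∧ c (Fin.last k) = t),
    ⋂ i, Vis (c i) with hCEdef
  have hCEmem : ∀ k t ω, ω ∈ CE k t ↔ ∃ c : Fin (k+1) → ℕ,
      ((∀ i j : Fin (k+1), i < j → c i + Lb < c j) ∧ c (Fin.last k) = t) ∧
      ∀ i, ω ∈ Vis (c i) := by
    intro k t ω; simp [hCEdef]
  set ME : ℕ → ℕ → Set Ω := fun k t => CE k t \ ⋃ (u : ℕ), ⋃ (_ : u < t), CE k u with hMEdef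
  have hCEmeas : ∀ k t, MeasurableSet (CE k t) := fun k t =>
    .iUnion fun c => .iUnion fun _ => .iInter fun i => hVismeas _
  have hMEmeas : ∀ k t, MeasurableSet (ME k t) := fun k t =>
    (hCEmeas k t).diff (.iUnion fun u => .iUnion fun _ => hCEmeas k u)
  have hHcUnion : ∀ k, Hc k = ⋃ t, CE k t := by
    intro k; ext ω
    rw [hHcmem]
    simp only [Set.mem_iUnion]
    constructor
    · rintro ⟨c, hc1, hc2⟩
      exact ⟨c (Fin.last k), (hCEmem k _ ω).2 ⟨c, ⟨hc1, rfl⟩, hc2⟩⟩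
    · rintro ⟨t, ht⟩
      obtain ⟨c, ⟨hc1, _⟩, hc2⟩ := (hCEmem k t ω).1 ht
      exact ⟨c, hc1, hc2⟩
  have hMEUnion : ∀ k, (⋃ t, ME k t) = ⋃ t, CE k t := by
    intro k; apply Set.Subset.antisymm
    · exact Set.iUnion_mono fun t => Set.diff_subset
    · intro ω hω
      rw [Set.mem_iUnion] at hω
      have hex : ∃ t, ω ∈ CE k t := hω
      rw [Set.mem_iUnion]
      refine ⟨Nat.find hex, Nat.find_spec hex, ?_⟩
      simp only [Set.mem_iUnion, not_exists]
      intro u hu hcu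
      exact Nat.find_min hex hu hcu
  have hMEdisj : ∀ k, Pairwise (Function.onFun Disjoint (ME k)) := by
    intro k t1 t2 hne
    simp only [Function.onFun]
    rcases hne.lt_or_gt with h | h
    · rw [Set.disjoint_left]
      intro ω h1 h2
      exact h2.2 (Set.mem_iUnion.2 ⟨t1, Set.mem_iUnion.2 ⟨h, h1.1⟩⟩)
    · rw [Set.disjoint_right]
      intro ω h2 h1
      exact h1.2 (Set.mem_iUnion.2 ⟨t2, Set.mem_iUnion.2 ⟨h, h2.1⟩⟩)
  set Tail : ℕ → Set Ω := fun t => ⋃ (n : ℕ), ⋃ (_ : Lb ≤ n),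
    {ω | ∑ j ∈ range n, φ (W (-(t:ℤ) - (j:ℤ)) ω) ≤ b} with hTaildef
  have hTailbound : ∀ t : ℕ, ℙ (Tail t) ≤ 2⁻¹ := by
    intro t
    have hinj1 : Function.Injective (fun j : ℕ => -(t:ℤ) - (j:ℤ)) := by
      intro x y h; simp only at h; omega
    have hinj0 : Function.Injective (fun j : ℕ => -(0:ℤ) - (j:ℤ)) := by
      intro x y h; simp only at h; omega
    have hlaw := law_shift hWmeas hWindep hWid _ _ hinj1 hinj0
    set E : Set (ℕ → 𝕎) := ⋃ (n : ℕ), ⋃ (_ : Lb ≤ n),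
      {v | ∑ j ∈ range n, φ (v j) ≤ b} with hEdef
    have hEmeas : MeasurableSet E := .iUnion fun n => .iUnion fun _ =>
      measurableSet_le (Finset.measurable_sum _ fun j _ =>
        hφ.comp (measurable_pi_apply j)) measurable_const
    have hmeas1 : Measurable (fun ω (j : ℕ) => W (-(t:ℤ) - (j:ℤ)) ω) :=
      measurable_pi_lambda _ fun j => hWmeas _
    have hmeas0 : Measurable (fun ω (j : ℕ) => W (-(0:ℤ) - (j:ℤ)) ω) :=
      measurable_pi_lambda _ fun j => hWmeas _
    have hpre1 : Tail t = (fun ω (j : ℕ) => W (-(t:ℤ) - (j:ℤ)) ω) ⁻¹' E := by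
      ext ω; simp [hTaildef, hEdef]
    have hpre0 : (fun ω (j : ℕ) => W (-(0:ℤ) - (j:ℤ)) ω) ⁻¹' E ⊆
        ⋃ n, ⋃ (_ : L₀ ≤ n), {ω | 2 * S' n ω ≤ (n:ℝ) * μ} := by
      intro ω hω
      simp only [hEdef, Set.mem_preimage, Set.mem_iUnion, Set.mem_setOf_eq] at hω
      obtain ⟨n, hn1, hn2⟩ := hω
      simp only [Set.mem_iUnion, Set.mem_setOf_eq]
      refine ⟨n, le_trans (Nat.le_add_right L₀ _) hn1, ?_⟩
      have hSn : S' n ω = ∑ j ∈ range n, φ (W (-(0:ℤ) - (j:ℤ)) ω) := by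
        refine Finset.sum_congr rfl fun j _ => ?_
        have : -(0:ℤ) - (j:ℤ) = -(j:ℤ) := by ring
        rw [this]
      have hb2 : 2 * b ≤ (n:ℝ) * μ := by
        have h1 : (2*b/μ : ℝ) ≤ (⌈2*b/μ⌉₊ : ℝ) := Nat.le_ceil _
        have h2 : ((⌈2*b/μ⌉₊ : ℕ) : ℝ) ≤ (n : ℝ) := by
          exact_mod_cast le_trans (Nat.le_add_left _ _) hn1
        rw [div_le_iff₀ hμ] at h1
        nlinarith
      rw [hSn]; linarith
    calc ℙ (Tail t) = Measure.map (fun ω (j : ℕ) => W (-(t:ℤ) - (j:ℤ)) ω) ℙ E := by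
          rw [hpre1, Measure.map_apply hmeas1 hEmeas]
      _ = Measure.map (fun ω (j : ℕ) => W (-(0:ℤ) - (j:ℤ)) ω) ℙ E := by rw [hlaw]
      _ = ℙ ((fun ω (j : ℕ) => W (-(0:ℤ) - (j:ℤ)) ω) ⁻¹' E) := Measure.map_apply hmeas0 hEmeas
      _ ≤ ℙ (⋃ n, ⋃ (_ : L₀ ≤ n), {ω | 2 * S' n ω ≤ (n:ℝ) * μ}) := measure_mono hpre0
      _ ≤ 2⁻¹ := hL₀
  have hsplit : ∀ (t n : ℕ) (ω : Ω), S' (t + n) ω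
      = S' t ω + ∑ j ∈ range n, φ (W (-(t:ℤ) - (j:ℤ)) ω) := by
    intro t n ω
    simp only [hS'def]
    rw [Finset.sum_range_add]
    congr 1
    refine Finset.sum_congr rfl fun j _ => ?_
    simp only [hX]
    have : -((t + j : ℕ) : ℤ) = -(t:ℤ) - (j:ℤ) := by push_cast; ring
    rw [this]
  have hkey : ∀ k, ℙ (Hc (k+1)) ≤ 2⁻¹ * ℙ (Hc k) := by
    intro k
    have hiI := (iIndepFun_iff_iIndep (fun _ : ℤ => (inferInstance : MeasurableSpace 𝕎)) W ℙ).1 hWindep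
    have hIndep : ∀ t : ℕ, ProbabilityTheory.Indep
        (⨆ i ∈ {i : ℤ | -(t:ℤ) < i}, MeasurableSpace.comap (W i) inferInstance)
        (⨆ i ∈ {i : ℤ | -(t:ℤ) < i}ᶜ, MeasurableSpace.comap (W i) inferInstance) ℙ :=
      fun t => indep_biSup_compl (fun i => (hWmeas i).comap_le) hiI _
    have hMEmeas' : ∀ t : ℕ, MeasurableSet[⨆ i ∈ {i : ℤ | -(t:ℤ) < i},
        MeasurableSpace.comap (W i) inferInstance] (ME k t) := by
      intro t
      have hWm' : ∀ i : ℤ, -(t:ℤ) < i → Measurable[⨆ i ∈ {i : ℤ | -(t:ℤ) < i},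
          MeasurableSpace.comap (W i) inferInstance] (W i) := by
        intro i hi
        rw [measurable_iff_comap_le]
        exact le_iSup₂ (f := fun (i : ℤ) (_ : i ∈ {i : ℤ | -(t:ℤ) < i}) =>
          MeasurableSpace.comap (W i) inferInstance) i hi
      have hVis' : ∀ n : ℕ, n ≤ t → MeasurableSet[⨆ i ∈ {i : ℤ | -(t:ℤ) < i},
          MeasurableSpace.comap (W i) inferInstance] (Vis n) := by
        intro n hn
        have hS'm : Measurable[⨆ i ∈ {i : ℤ | -(t:ℤ) < i},
            MeasurableSpace.comap (W i) inferInstance] (S' n) := by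
          simp only [hS'def]
          refine Finset.measurable_sum _ fun j hj => ?_
          rw [Finset.mem_range] at hj
          have hji : -(t:ℤ) < -(j:ℤ) := by
            have : (j:ℤ) < (t:ℤ) := by exact_mod_cast lt_of_lt_of_le hj hn
            omega
          exact hφ.comp (hWm' _ hji)
        exact (measurableSet_lt measurable_const hS'm).inter
          (measurableSet_le hS'm measurable_const)
      have hCE' : ∀ u : ℕ, u ≤ t → MeasurableSet[⨆ i ∈ {i : ℤ | -(t:ℤ) < i},
          MeasurableSpace.comap (W i) inferInstance] (CE k u) := by
        intro u hu
        refine MeasurableSet.iUnion fun c => MeasurableSet.iUnion fun hc =>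
          MeasurableSet.iInter fun i => ?_
        refine hVis' _ (le_trans ?_ hu)
        rcases lt_or_eq_of_le (Fin.le_last i) with h | h
        · have h2 := hc.1 i (Fin.last k) h
          rw [hc.2] at h2; omega
        · rw [h, hc.2]
      exact (hCE' t le_rfl).diff
        (MeasurableSet.iUnion fun u => MeasurableSet.iUnion fun hu => hCE' u (le_of_lt hu))
    have hTailmeas' : ∀ t : ℕ, MeasurableSet[⨆ i ∈ {i : ℤ | -(t:ℤ) < i}ᶜ,
        MeasurableSpace.comap (W i) inferInstance] (Tail t) := by
      intro t
      refine MeasurableSet.iUnion fun n => MeasurableSet.iUnion fun _ => ?_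
      have hsumm : Measurable[⨆ i ∈ {i : ℤ | -(t:ℤ) < i}ᶜ,
          MeasurableSpace.comap (W i) inferInstance]
          (fun ω => ∑ j ∈ range n, φ (W (-(t:ℤ) - (j:ℤ)) ω)) := by
        refine Finset.measurable_sum _ fun j _ => ?_
        refine hφ.comp ?_
        rw [measurable_iff_comap_le]
        refine le_iSup₂ (f := fun (i : ℤ) (_ : i ∈ {i : ℤ | -(t:ℤ) < i}ᶜ) =>
          MeasurableSpace.comap (W i) inferInstance) (-(t:ℤ) - (j:ℤ)) ?_
        simp only [Set.mem_compl_iff, Set.mem_setOf_eq, not_lt]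
        omega
      exact measurableSet_le hsumm measurable_const
    have hprod : ∀ t : ℕ, ℙ (ME k t ∩ Tail t) = ℙ (ME k t) * ℙ (Tail t) :=
      fun t => (Indep_iff _ _ _).1 (hIndep t) _ _ (hMEmeas' t) (hTailmeas' t)
    have hincl : Hc (k+1) ⊆ ⋃ t, ME k t ∩ Tail t := by
      intro ω hω
      obtain ⟨c, hc1, hc2⟩ := (hHcmem (k+1) ω).1 hω
      have hc'1 : ∀ i j : Fin (k+1), i < j →
          c i.castSucc + Lb < c j.castSucc := fun i j hij =>
        hc1 _ _ (by rwa [Fin.castSucc_lt_castSucc_iff])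
      have hCEc : ω ∈ CE k (c (Fin.last k).castSucc) :=
        (hCEmem _ _ ω).2 ⟨fun i => c i.castSucc, ⟨hc'1, rfl⟩, fun i => hc2 _⟩
      have hex : ∃ t, ω ∈ CE k t := ⟨_, hCEc⟩
      have hME : ω ∈ ME k (Nat.find hex) := by
        refine ⟨Nat.find_spec hex, ?_⟩
        simp only [Set.mem_iUnion, not_exists]
        intro u hu
        exact Nat.find_min hex hu
      have ht₀le : Nat.find hex ≤ c (Fin.last k).castSucc := Nat.find_min' hex hCEc
      have ht₀vis : ω ∈ Vis (Nat.find hex) := by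
        obtain ⟨cc, ⟨_, hlast⟩, hccvis⟩ := (hCEmem k _ ω).1 (Nat.find_spec hex)
        rw [← hlast]; exact hccvis _
      have hs₁vis : ω ∈ Vis (c (Fin.last (k+1))) := hc2 _
      have hgap : c (Fin.last k).castSucc + Lb < c (Fin.last (k+1)) :=
        hc1 _ _ (Fin.castSucc_lt_last _)
      refine Set.mem_iUnion.2 ⟨Nat.find hex, hME, ?_⟩
      simp only [hTaildef, Set.mem_iUnion, Set.mem_setOf_eq]
      refine ⟨c (Fin.last (k+1)) - Nat.find hex, by omega, ?_⟩
      have heq : Nat.find hex + (c (Fin.last (k+1)) - Nat.find hex) = c (Fin.last (k+1)) := by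
        omega
      have hs2 := hsplit (Nat.find hex) (c (Fin.last (k+1)) - Nat.find hex) ω
      rw [heq] at hs2
      have hv1 : a < S' (Nat.find hex) ω := ht₀vis.1
      have hv2 : S' (c (Fin.last (k+1))) ω ≤ a + b := hs₁vis.2
      linarith
    calc ℙ (Hc (k+1)) ≤ ℙ (⋃ t, ME k t ∩ Tail t) := measure_mono hincl
      _ ≤ ∑' t, ℙ (ME k t ∩ Tail t) := measure_iUnion_le _
      _ = ∑' t, ℙ (ME k t) * ℙ (Tail t) := tsum_congr fun t => hprod t
      _ ≤ ∑' t, ℙ (ME k t) * 2⁻¹ :=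
          ENNReal.tsum_le_tsum fun t => mul_le_mul_right (hTailbound t) _
      _ = (∑' t, ℙ (ME k t)) * 2⁻¹ := ENNReal.tsum_mul_right
      _ = ℙ (⋃ t, ME k t) * 2⁻¹ := by
          rw [measure_iUnion (hMEdisj k) (hMEmeas k)]
      _ = 2⁻¹ * ℙ (Hc k) := by rw [hMEUnion k, ← hHcUnion k, mul_comm]
  have hHcbound : ∀ k : ℕ, ℙ (Hc k) ≤ 2⁻¹ ^ k := by
    intro k
    induction k with
    | zero => simpa using prob_le_one
    | succ k ih =>
        calc ℙ (Hc (k+1)) ≤ 2⁻¹ * ℙ (Hc k) := hkey k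
          _ ≤ 2⁻¹ * 2⁻¹ ^ k := mul_le_mul_right ih _
          _ = 2⁻¹ ^ (k+1) := by rw [pow_succ, mul_comm]
  -- pointwise bound
  set Vf : Ω → ENNReal := fun ω => ∑' n, (Vis n).indicator (fun _ => (1:ENNReal)) ω with hVfdef
  set Jf : Ω → ENNReal := fun ω => ∑' k, (Hc k).indicator (fun _ => (1:ENNReal)) ω with hJfdef
  have hVJ : ∀ ω, Vf ω ≤ ((Lb + 1 : ℕ) : ENNReal) * Jf ω := by
    intro ω
    by_cases hall : ∀ k, ω ∈ Hc k
    · have hJtop : Jf ω = ⊤ := by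
        simp only [hJfdef]
        have hone : ∀ k : ℕ, (Hc k).indicator (fun _ => (1:ENNReal)) ω = 1 := fun k =>
          Set.indicator_of_mem (hall k) _
        rw [tsum_congr hone]
        exact ENNReal.tsum_const_eq_top_of_ne_zero one_ne_zero
      rw [hJtop, ENNReal.mul_top (by exact_mod_cast Nat.succ_ne_zero Lb)]
      exact le_top
    · push_neg at hall
      have hex : ∃ k, ω ∉ Hc k := hall
      have hnot : ω ∉ Hc (Nat.find hex) := Nat.find_spec hex
      have hmin : ∀ j, j < Nat.find hex → ω ∈ Hc j := fun j hj =>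
        not_not.1 (Nat.find_min hex hj)
      have hchain : ¬ ∃ c : Fin (Nat.find hex + 1) → ℕ,
          (∀ i j : Fin (Nat.find hex + 1), i < j → c i + Lb < c j) ∧
          ∀ i, c i ∈ {n : ℕ | ω ∈ Vis n} := by
        intro hcon
        obtain ⟨c, hc1, hc2⟩ := hcon
        exact hnot ((hHcmem _ ω).2 ⟨c, hc1, fun i => hc2 i⟩)
      have hcomb := comb Lb (Nat.find hex) {n : ℕ | ω ∈ Vis n} hchain
      have hVeq : Vf ω = ∑' n, Set.indicator {n : ℕ | ω ∈ Vis n} (fun _ => (1:ENNReal)) n := by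
        simp only [hVfdef]
        refine tsum_congr fun n => ?_
        by_cases h : ω ∈ Vis n
        · rw [Set.indicator_of_mem h, Set.indicator_of_mem (show n ∈ {n : ℕ | ω ∈ Vis n} from h)]
        · rw [Set.indicator_of_notMem h,
            Set.indicator_of_notMem (show n ∉ {n : ℕ | ω ∈ Vis n} from h)]
      have hJge : ((Nat.find hex : ℕ) : ENNReal) ≤ Jf ω := by
        calc ((Nat.find hex : ℕ) : ENNReal) = ∑ k ∈ range (Nat.find hex), 1 := by simp
          _ = ∑ k ∈ range (Nat.find hex), (Hc k).indicator (fun _ => (1:ENNReal)) ω := by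
              refine Finset.sum_congr rfl fun k hk => ?_
              rw [Set.indicator_of_mem (hmin k (Finset.mem_range.1 hk))]
          _ ≤ Jf ω := ENNReal.sum_le_tsum _
      calc Vf ω ≤ ((Nat.find hex : ℕ) : ENNReal) * ((Lb : ENNReal) + 1) := by
            rw [hVeq]; exact hcomb
        _ = ((Lb + 1 : ℕ) : ENNReal) * ((Nat.find hex : ℕ) : ENNReal) := by
            push_cast; ring
        _ ≤ ((Lb + 1 : ℕ) : ENNReal) * Jf ω := mul_le_mul_right hJge _
  -- moment bound
  have hrpowmeas : Measurable (fun y : ENNReal => y ^ q) := ENNReal.continuous_rpow_const.measurable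
  have hJmom : ∫⁻ ω, (Jf ω) ^ q ∂ℙ ≤ cG ^ q := by
    have hmeasInd : ∀ k : ℕ, Measurable ((Hc k).indicator (fun _ => (1:ENNReal))) :=
      fun k => measurable_const.indicator (hHcmeas k)
    set JN : ℕ → Ω → ENNReal :=
      fun N ω => ∑ k ∈ range N, (Hc k).indicator (fun _ => (1:ENNReal)) ω with hJNdef
    have hJNmeas : ∀ N, Measurable (JN N) := fun N =>
      Finset.measurable_sum _ fun k _ => hmeasInd k
    have hJNmono : ∀ ω, Monotone (fun N => JN N ω) := fun ω N1 N2 h =>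
      Finset.sum_le_sum_of_subset (Finset.range_subset_range.2 h)
    have hstep1 : ∀ ω, (Jf ω) ^ q = ⨆ N, (JN N ω) ^ q := by
      intro ω
      have hJeq : Jf ω = ⨆ N, JN N ω := ENNReal.tsum_eq_iSup_nat
      rw [hJeq]
      exact iSup_rpow_of_monotone _ (hJNmono ω) q hq0
    have hindpow : ∀ k : ℕ, ∫⁻ ω, ((Hc k).indicator (fun _ => (1:ENNReal)) ω) ^ q ∂ℙ
        = ℙ (Hc k) := by
      intro k
      have : ∀ ω, ((Hc k).indicator (fun _ => (1:ENNReal)) ω) ^ q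
          = (Hc k).indicator (fun _ => (1:ENNReal)) ω := by
        intro ω
        by_cases h : ω ∈ Hc k
        · simp [Set.indicator_of_mem h]
        · simp [Set.indicator_of_notMem h, ENNReal.zero_rpow_of_pos hq0]
      rw [lintegral_congr this, lintegral_indicator_const (hHcmeas k), one_mul]
    have hN : ∀ N : ℕ, ∫⁻ ω, (JN N ω) ^ q ∂ℙ ≤ cG ^ q := by
      intro N
      have hmink := lp_sum_le ℙ (fun k => (Hc k).indicator (fun _ => (1:ENNReal)))
        hmeasInd q hq1 N
      have hterm : ∀ k : ℕ, (∫⁻ ω, ((Hc k).indicator (fun _ => (1:ENNReal)) ω) ^ q ∂ℙ) ^ (1/q)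
          ≤ r ^ k := by
        intro k
        rw [hindpow k]
        calc (ℙ (Hc k)) ^ (1/q) ≤ ((2:ENNReal)⁻¹ ^ k) ^ (1/q) :=
              ENNReal.rpow_le_rpow (hHcbound k) (by positivity)
          _ = r ^ k := by
              rw [hrdef, ← ENNReal.rpow_natCast (2:ENNReal)⁻¹ k, ← ENNReal.rpow_mul, mul_comm,
                ENNReal.rpow_mul, ENNReal.rpow_natCast]
      have hlhs : (∫⁻ ω, (JN N ω) ^ q ∂ℙ) ^ (1/q) ≤ cG := by
        calc (∫⁻ ω, (JN N ω) ^ q ∂ℙ) ^ (1/q)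
            ≤ ∑ k ∈ range N, (∫⁻ ω, ((Hc k).indicator (fun _ => (1:ENNReal)) ω) ^ q ∂ℙ) ^ (1/q) :=
              hmink
          _ ≤ ∑ k ∈ range N, r ^ k := Finset.sum_le_sum fun k _ => hterm k
          _ ≤ ∑' k : ℕ, r ^ k := ENNReal.sum_le_tsum _
          _ = cG := by rw [ENNReal.tsum_geometric, hcGdef]
      have := ENNReal.rpow_le_rpow hlhs hq0.le
      rwa [← ENNReal.rpow_mul, one_div, inv_mul_cancel₀ hq0.ne', ENNReal.rpow_one] at this
    calc ∫⁻ ω, (Jf ω) ^ q ∂ℙ = ∫⁻ ω, ⨆ N, (JN N ω) ^ q ∂ℙ := lintegral_congr hstep1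
      _ = ⨆ N, ∫⁻ ω, (JN N ω) ^ q ∂ℙ := by
          refine lintegral_iSup (fun N => hrpowmeas.comp (hJNmeas N)) ?_
          intro N1 N2 h ω
          exact ENNReal.rpow_le_rpow (hJNmono ω h) hq0.le
      _ ≤ cG ^ q := iSup_le hN
  have hJfmeas : Measurable Jf :=
    Measurable.ennreal_tsum fun k => measurable_const.indicator (hHcmeas k)
  have hVmom : ∫⁻ ω, (Vf ω) ^ q ∂ℙ ≤ (((Lb + 1 : ℕ) : ENNReal) * cG) ^ q := by
    have h1 : ∀ ω, (Vf ω) ^ q ≤ ((Lb + 1 : ℕ) : ENNReal) ^ q * (Jf ω) ^ q := by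
      intro ω
      rw [← ENNReal.mul_rpow_of_nonneg _ _ hq0.le]
      exact ENNReal.rpow_le_rpow (hVJ ω) hq0.le
    calc ∫⁻ ω, (Vf ω) ^ q ∂ℙ
        ≤ ∫⁻ ω, ((Lb + 1 : ℕ) : ENNReal) ^ q * (Jf ω) ^ q ∂ℙ := lintegral_mono h1
      _ = ((Lb + 1 : ℕ) : ENNReal) ^ q * ∫⁻ ω, (Jf ω) ^ q ∂ℙ :=
          lintegral_const_mul _ (hrpowmeas.comp hJfmeas)
      _ ≤ ((Lb + 1 : ℕ) : ENNReal) ^ q * cG ^ q := mul_le_mul_right hJmom _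
      _ = (((Lb + 1 : ℕ) : ENNReal) * cG) ^ q :=
          (ENNReal.mul_rpow_of_nonneg _ _ hq0.le).symm
  -- measure-theoretic reduction to the product space
  set Φ : ℕ → Ω → (ℤ → 𝕎) := fun n ω j => W ((n:ℤ) + j) ω with hΦdef
  have hΦmeas : ∀ n, Measurable (Φ n) := fun n => measurable_pi_lambda _ fun j => hWmeas _
  set ν : Measure (ℤ → 𝕎) := Measure.map (Φ 0) ℙ with hνdef
  have hνprob : IsProbabilityMeasure ν := Measure.isProbabilityMeasure_map (hΦmeas 0).aemeasurable
  have hlawn : ∀ n : ℕ, Measure.map (Φ n) ℙ = ν := by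
    intro n
    rw [hνdef]
    exact law_shift hWmeas hWindep hWid (fun j : ℤ => (n:ℤ) + j) (fun j : ℤ => ((0:ℕ):ℤ) + j)
      (fun x y h => by simpa using h) (fun x y h => by simpa using h)
  set g : ℕ → (ℤ → 𝕎) → ℝ := fun n w => ∑ j ∈ range n, φ (w (-(j:ℤ))) with hgdef
  have hgmeas : ∀ n, Measurable (g n) := fun n =>
    Finset.measurable_sum _ fun j _ => hφ.comp (measurable_pi_apply _)
  set D : ℕ → Set (ℤ → 𝕎) := fun n => {w | a < g n w ∧ g n w ≤ a + b} with hDdef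
  have hDmeas : ∀ n, MeasurableSet (D n) := fun n =>
    (measurableSet_lt measurable_const (hgmeas n)).inter
      (measurableSet_le (hgmeas n) measurable_const)
  have hAeq : ∀ n : ℕ, {ω | Wstar n ω ∈ B ∧ a < S n ω ∧ S n ω ≤ a + b}
      = Φ n ⁻¹' (B ∩ D n) := by
    intro n
    ext ω
    have hWs : Wstar n ω = Φ n ω := funext fun j => hWstar n ω j
    have hSg : S n ω = g n (Φ n ω) := by
      rw [hS n ω]
      simp only [hgdef, hΦdef]
      refine Finset.sum_nbij' (i := fun (k : ℕ) => n - k) (j := fun (k : ℕ) => n - k)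
        ?_ ?_ ?_ ?_ ?_
      · intro k hk
        simp only [Finset.mem_Icc] at hk
        simp only [Finset.mem_range]
        omega
      · intro k hk
        simp only [Finset.mem_range] at hk
        simp only [Finset.mem_Icc]
        omega
      · intro k hk
        simp only [Finset.mem_Icc] at hk
        beta_reduce
        omega
      · intro k hk
        simp only [Finset.mem_range] at hk
        beta_reduce
        omega
      · intro k hk
        simp only [Finset.mem_Icc] at hk
        beta_reduce
        have hidx : ((n:ℤ)) + -(((n - k : ℕ)):ℤ) = (k:ℤ) := by
          push_cast [Nat.cast_sub hk.2]
          ring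
        rw [hidx]
    simp only [Set.mem_setOf_eq, Set.mem_preimage, Set.mem_inter_iff, hWs, hSg]
    rw [hDdef]
    simp only [Set.mem_setOf_eq]
  have hProbEq : ∀ n : ℕ, ℙ {ω | Wstar n ω ∈ B ∧ a < S n ω ∧ S n ω ≤ a + b}
      = ν (B ∩ D n) := by
    intro n
    rw [hAeq n, ← Measure.map_apply (hΦmeas n) (hB.inter (hDmeas n)), hlawn n]
  set Vν : (ℤ → 𝕎) → ENNReal := fun w => ∑' n, (D n).indicator (fun _ => (1:ENNReal)) w
    with hVνdef
  have hVνmeas : Measurable Vν :=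
    Measurable.ennreal_tsum fun n => measurable_const.indicator (hDmeas n)
  have hVcomp : ∀ ω, Vν (Φ 0 ω) = Vf ω := by
    intro ω
    simp only [hVνdef, hVfdef]
    refine tsum_congr fun n => ?_
    have hgS : g n (Φ 0 ω) = S' n ω := by
      simp only [hgdef, hΦdef, hS'def, hX]
      refine Finset.sum_congr rfl fun j _ => ?_
      have : (((0:ℕ)):ℤ) + -(j:ℤ) = -(j:ℤ) := by push_cast; ring
      rw [this]
    have hmem : Φ 0 ω ∈ D n ↔ ω ∈ Vis n := by
      rw [hDdef, hVisdef]
      simp only [Set.mem_setOf_eq, hgS]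
    by_cases h : ω ∈ Vis n
    · rw [Set.indicator_of_mem (hmem.2 h), Set.indicator_of_mem h]
    · rw [Set.indicator_of_notMem (fun hc => h (hmem.1 hc)), Set.indicator_of_notMem h]
  have hconj : (α⁻¹).HolderConjugate q := by
    rw [Real.holderConjugate_iff]
    constructor
    · rw [lt_inv_comm₀ one_pos hα]
      simpa using hα'
    · rw [inv_inv, hqdef, inv_inv]
      ring
  have hsum : ∑' n : ℕ, ν (B ∩ D n)
      = ∫⁻ w, (B.indicator (fun _ => (1:ENNReal)) * Vν) w ∂ν := by
    calc ∑' n : ℕ, ν (B ∩ D n)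
        = ∑' n : ℕ, ∫⁻ w, (B ∩ D n).indicator (fun _ => (1:ENNReal)) w ∂ν := by
          refine tsum_congr fun n => ?_
          rw [lintegral_indicator_const (hB.inter (hDmeas n)), one_mul]
      _ = ∫⁻ w, ∑' n : ℕ, (B ∩ D n).indicator (fun _ => (1:ENNReal)) w ∂ν :=
          (lintegral_tsum fun n =>
            (measurable_const.indicator (hB.inter (hDmeas n))).aemeasurable).symm
      _ = ∫⁻ w, (B.indicator (fun _ => (1:ENNReal)) * Vν) w ∂ν := by
          refine lintegral_congr fun w => ?_
          simp only [Pi.mul_apply, hVνdef]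
          by_cases hw : w ∈ B
          · rw [Set.indicator_of_mem hw, one_mul]
            refine tsum_congr fun n => ?_
            by_cases hd : w ∈ D n
            · rw [Set.indicator_of_mem (Set.mem_inter hw hd), Set.indicator_of_mem hd]
            · rw [Set.indicator_of_notMem (fun hc => hd hc.2),
                Set.indicator_of_notMem hd]
          · rw [Set.indicator_of_notMem hw, zero_mul]
            have hz : ∀ n : ℕ, (B ∩ D n).indicator (fun _ => (1:ENNReal)) w = 0 :=
              fun n => Set.indicator_of_notMem (fun hc => hw hc.1) _
            rw [tsum_congr hz, tsum_zero]
  have hf1 : ∫⁻ w, (B.indicator (fun _ => (1:ENNReal)) w) ^ (α⁻¹) ∂ν = ν B := by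
    have hpt : ∀ w, (B.indicator (fun _ => (1:ENNReal)) w) ^ (α⁻¹)
        = B.indicator (fun _ => (1:ENNReal)) w := by
      intro w
      by_cases hw : w ∈ B
      · simp [Set.indicator_of_mem hw]
      · simp [Set.indicator_of_notMem hw,
          ENNReal.zero_rpow_of_pos (by positivity : (0:ℝ) < α⁻¹)]
    rw [lintegral_congr hpt, lintegral_indicator_const hB, one_mul]
  have hf2 : ∫⁻ w, (Vν w) ^ q ∂ν ≤ (((Lb + 1 : ℕ) : ENNReal) * cG) ^ q := by
    rw [hνdef, lintegral_map (show Measurable fun w : ℤ → 𝕎 => (Vν w) ^ q from hrpowmeas.comp hVνmeas) (hΦmeas 0)]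
    calc ∫⁻ ω, (Vν (Φ 0 ω)) ^ q ∂ℙ = ∫⁻ ω, (Vf ω) ^ q ∂ℙ :=
          lintegral_congr fun ω => by rw [hVcomp ω]
      _ ≤ _ := hVmom
  have hmain : ∑' n : ℕ, ν (B ∩ D n) ≤ (ν B) ^ α * (((Lb + 1 : ℕ) : ENNReal) * cG) := by
    calc ∑' n : ℕ, ν (B ∩ D n)
        = ∫⁻ w, (B.indicator (fun _ => (1:ENNReal)) * Vν) w ∂ν := hsum
      _ ≤ (∫⁻ w, (B.indicator (fun _ => (1:ENNReal)) w) ^ (α⁻¹) ∂ν) ^ (1/(α⁻¹))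
            * (∫⁻ w, (Vν w) ^ q ∂ν) ^ (1/q) :=
          ENNReal.lintegral_mul_le_Lp_mul_Lq ν hconj
            (measurable_const.indicator hB).aemeasurable hVνmeas.aemeasurable
      _ ≤ (ν B) ^ α * (((Lb + 1 : ℕ) : ENNReal) * cG) := by
          rw [hf1, one_div, inv_inv]
          refine mul_le_mul' le_rfl ?_
          calc (∫⁻ w, (Vν w) ^ q ∂ν) ^ (1/q)
              ≤ ((((Lb + 1 : ℕ) : ENNReal) * cG) ^ q) ^ (1/q) :=
                ENNReal.rpow_le_rpow hf2 (by positivity)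
            _ = ((Lb + 1 : ℕ) : ENNReal) * cG := by
                rw [← ENNReal.rpow_mul, mul_one_div_cancel hq0.ne', ENNReal.rpow_one]
  -- conversion to the real-valued statement
  have hRHSne : (ν B) ^ α * (((Lb + 1 : ℕ) : ENNReal) * cG) ≠ ⊤ := by
    refine ENNReal.mul_ne_top ?_ (ENNReal.mul_ne_top (by simp) hcGne)
    exact ENNReal.rpow_ne_top_of_nonneg hα.le (measure_ne_top _ _)
  have hterm_ne : ∀ n : ℕ, ℙ {ω | Wstar n ω ∈ B ∧ a < S n ω ∧ S n ω ≤ a + b} ≠ ⊤ :=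
    fun n => measure_ne_top _ _
  rw [← ENNReal.tsum_toReal_eq hterm_ne]
  have hTeq : ∑' n : ℕ, ℙ {ω | Wstar n ω ∈ B ∧ a < S n ω ∧ S n ω ≤ a + b}
      = ∑' n : ℕ, ν (B ∩ D n) := tsum_congr fun n => hProbEq n
  rw [hTeq]
  have h1 := ENNReal.toReal_mono hRHSne hmain
  refine le_trans h1 ?_
  have hPB : ℙ {ω | Wstar 0 ω ∈ B} = ν B := by
    have hset : {ω | Wstar 0 ω ∈ B} = Φ 0 ⁻¹' B := by
      ext ω
      have : Wstar 0 ω = Φ 0 ω := funext fun j => hWstar 0 ω j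
      simp [Set.mem_preimage, this]
    rw [hset, hνdef, Measure.map_apply (hΦmeas 0) hB]
  rw [hPB]
  rw [ENNReal.toReal_mul, ENNReal.toReal_mul, ← ENNReal.toReal_rpow]
  have hLbb : ((Lb + 1 : ℕ) : ℝ) ≤ ((L₀:ℝ) + 2 + 2/μ) * (1 + b) := by
    have hceil : ((⌈2*b/μ⌉₊ : ℕ) : ℝ) < 2*b/μ + 1 := Nat.ceil_lt_add_one (by positivity)
    have hcast : ((Lb + 1 : ℕ) : ℝ) = (L₀:ℝ) + ((⌈2*b/μ⌉₊ : ℕ) : ℝ) + 1 := by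
      rw [hLbdef]; push_cast; ring
    have hdiv : (2*b/μ : ℝ) = (2/μ) * b := by ring
    have h2μ : (0:ℝ) ≤ 2/μ := by positivity
    nlinarith [mul_nonneg (Nat.cast_nonneg L₀ : (0:ℝ) ≤ (L₀:ℝ)) hb, mul_nonneg h2μ hb]
  have hx : (0:ℝ) ≤ (ν B).toReal ^ α := Real.rpow_nonneg ENNReal.toReal_nonneg α
  have hcg : (0:ℝ) ≤ cG.toReal := ENNReal.toReal_nonneg
  calc (ν B).toReal ^ α * (((Lb + 1 : ℕ) : ENNReal).toReal * cG.toReal)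
      = ((ν B).toReal ^ α * cG.toReal) * ((Lb + 1 : ℕ) : ℝ) := by
        rw [ENNReal.toReal_natCast]; ring
    _ ≤ ((ν B).toReal ^ α * cG.toReal) * (((L₀:ℝ) + 2 + 2/μ) * (1 + b)) :=
        mul_le_mul_of_nonneg_left hLbb (mul_nonneg hx hcg)
    _ = ((L₀:ℝ) + 2 + 2/μ) * cG.toReal * (1 + b) * (ν B).toReal ^ α := by ring
end

section
/- Let ξ^o_n = Σ_{k=1}^n [L_{n−k+1} − (τ_n − τ_{n−k})]_+ with L_k i.i.d. Exp(θ) independent of the Poisson arrival process with interarrival times η_k i.i.d. Exp(λ). Then for every p > 0, sup_n E|ξ^o_n|^p < ∞. -/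
open MeasureTheory ProbabilityTheory Filter Finset
open scoped ENNReal NNReal

/-- Lebesgue integral of `exp (u * x)` against the exponential measure. -/
lemma aux_lintegral_exp (ρ u : ℝ) (hρ : 0 < ρ) (hu : u < ρ) :
    ∫⁻ x, ENNReal.ofReal (Real.exp (u * x)) ∂(expMeasure ρ) = ENNReal.ofReal (ρ / (ρ - u)) := by
  have hρu : 0 < ρ - u := by linarith
  have hmeas : Measurable fun x : ℝ => ENNReal.ofReal (Real.exp (u * x)) :=
    ((measurable_const.mul measurable_id').exp).ennreal_ofReal
  have hexp : expMeasure ρ = MeasureTheory.volume.withDensity (exponentialPDF ρ) := rfl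
  have hpdfmeas : ∀ v : ℝ, Measurable (exponentialPDF v) := fun v =>
    (measurable_exponentialPDFReal v).ennreal_ofReal
  rw [hexp, lintegral_withDensity_eq_lintegral_mul _ (hpdfmeas ρ) hmeas]
  have heq : ∀ x : ℝ, (exponentialPDF ρ * fun x => ENNReal.ofReal (Real.exp (u * x))) x
      = ENNReal.ofReal (ρ / (ρ - u)) * exponentialPDF (ρ - u) x := by
    intro x
    rcases le_or_gt 0 x with hx | hx
    · rw [Pi.mul_apply, exponentialPDF_of_nonneg hx, exponentialPDF_of_nonneg hx,
        ← ENNReal.ofReal_mul (by positivity), ← ENNReal.ofReal_mul (by positivity)]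
      congr 1
      have hne : ρ - u ≠ 0 := ne_of_gt hρu
      rw [mul_assoc, ← Real.exp_add, show -(ρ * x) + u * x = -((ρ - u) * x) by ring,
        ← mul_assoc, div_mul_cancel₀ ρ hne]
    · rw [Pi.mul_apply, exponentialPDF_of_neg hx, exponentialPDF_of_neg hx, zero_mul, mul_zero]
  rw [lintegral_congr heq, lintegral_const_mul _ (hpdfmeas (ρ - u)),
    lintegral_exponentialPDF_eq_one hρu, mul_one]

/-- Integrability and value of the exponential moment of an exponentially
distributed random variable. -/
lemma aux_exp_moment {Ω : Type*} [MeasureSpace Ω]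
    {Y : Ω → ℝ} (hY : Measurable Y) {ρ : ℝ} (hρ : 0 < ρ)
    (hmap : Measure.map Y ℙ = expMeasure ρ) {u : ℝ} (hu : u < ρ) :
    Integrable (fun ω => Real.exp (u * Y ω)) ℙ ∧
      ∫ ω, Real.exp (u * Y ω) ∂ℙ = ρ / (ρ - u) := by
  have hρu : 0 < ρ - u := by linarith
  have hmeas : Measurable fun ω => Real.exp (u * Y ω) := (hY.const_mul u).exp
  have hfm : Measurable fun x : ℝ => ENNReal.ofReal (Real.exp (u * x)) :=
    ((measurable_const.mul measurable_id').exp).ennreal_ofReal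
  have hlint : ∫⁻ ω, ENNReal.ofReal (Real.exp (u * Y ω)) ∂ℙ = ENNReal.ofReal (ρ / (ρ - u)) := by
    have h1 : ∫⁻ ω, ENNReal.ofReal (Real.exp (u * Y ω)) ∂ℙ
        = ∫⁻ x, ENNReal.ofReal (Real.exp (u * x)) ∂(Measure.map Y ℙ) :=
      (lintegral_map hfm hY).symm
    rw [h1, hmap, aux_lintegral_exp ρ u hρ hu]
  have hnn : 0 ≤ᵐ[ℙ] fun ω => Real.exp (u * Y ω) :=
    Filter.Eventually.of_forall fun ω => (Real.exp_pos _).le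
  have hint : Integrable (fun ω => Real.exp (u * Y ω)) ℙ := by
    refine ⟨hmeas.aestronglyMeasurable, ?_⟩
    rw [hasFiniteIntegral_iff_ofReal hnn, hlint]
    exact ENNReal.ofReal_lt_top
  refine ⟨hint, ?_⟩
  rw [integral_eq_lintegral_of_nonneg_ae hnn hmeas.aestronglyMeasurable, hlint,
    ENNReal.toReal_ofReal (by positivity)]

/-- Minkowski inequality for finite sums of `ℝ≥0∞`-valued functions. -/
lemma aux_minkowski {α κ : Type*} [MeasurableSpace α] (μ : Measure α) {q : ℝ} (hq : 1 ≤ q)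
    (s : Finset κ) (f : κ → α → ℝ≥0∞) (hf : ∀ k, Measurable (f k)) :
    (∫⁻ a, (∑ k ∈ s, f k a) ^ q ∂μ) ^ (1 / q) ≤ ∑ k ∈ s, (∫⁻ a, f k a ^ q ∂μ) ^ (1 / q) := by
  classical
  induction s using Finset.induction_on with
  | empty =>
    have hq0 : (0:ℝ) < q := lt_of_lt_of_le one_pos hq
    simp only [Finset.sum_empty, ENNReal.zero_rpow_of_pos hq0, lintegral_zero,
      ENNReal.zero_rpow_of_pos (by positivity : (0:ℝ) < 1 / q), le_refl]
  | insert a s' hnotmem ih =>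
    simp only [Finset.sum_insert hnotmem]
    calc (∫⁻ x, (f a x + ∑ k ∈ s', f k x) ^ q ∂μ) ^ (1 / q)
        ≤ (∫⁻ x, f a x ^ q ∂μ) ^ (1 / q) + (∫⁻ x, (∑ k ∈ s', f k x) ^ q ∂μ) ^ (1 / q) := by
          have := ENNReal.lintegral_Lp_add_le (μ := μ) (f := f a)
            (g := fun x => ∑ k ∈ s', f k x) (hf a).aemeasurable
            (Finset.measurable_sum s' fun k _ => hf k).aemeasurable hq
          simpa using this
      _ ≤ (∫⁻ x, f a x ^ q ∂μ) ^ (1 / q) + ∑ k ∈ s', (∫⁻ x, f k x ^ q ∂μ) ^ (1 / q) := by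
          gcongr

/-- Per-term bound: the `m`-th moment of `[L_j − (η-sum over Ioc (n−k) n)]₊` is geometric in `k`. -/
lemma aux_term {Ω : Type*} [MeasureSpace Ω] [IsProbabilityMeasure (ℙ : Measure Ω)]
    (θ lam : ℝ) (hθ : 0 < θ) (hlam : 0 < lam)
    (L : ℕ → Ω → ℝ) (η : ℕ → Ω → ℝ)
    (hLmeas : ∀ k, Measurable (L k)) (hηmeas : ∀ k, Measurable (η k))
    (hLexp : ∀ k, 1 ≤ k → Measure.map (L k) ℙ = expMeasure θ)
    (hηexp : ∀ k, 1 ≤ k → Measure.map (η k) ℙ = expMeasure lam)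
    (hindep : iIndepFun
      (fun p : ℕ ⊕ ℕ => Sum.elim L η p) ℙ)
    (m : ℕ) (hm1 : 1 ≤ m) (n k : ℕ) (hk1 : 1 ≤ k) (hkn : k ≤ n) :
    ∫⁻ ω, ENNReal.ofReal
        ((max (L (n - k + 1) ω - ∑ i ∈ Finset.Ioc (n - k) n, η i ω) 0) ^ m) ∂ℙ
      ≤ ENNReal.ofReal (((m.factorial : ℝ) / (θ/2) ^ m) * (θ / (θ - θ/2))
          * (lam / (lam + θ/2)) ^ k) := by
  set t : ℝ := θ / 2 with ht_def
  have ht : 0 < t := by positivity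
  have htθ : t < θ := by rw [ht_def]; linarith
  set c : ℝ := (m.factorial : ℝ) / t ^ m with hc_def
  have hc : 0 < c := by positivity
  -- pointwise key inequality
  have hkey : ∀ x : ℝ, max x 0 ^ m ≤ c * Real.exp (t * x) := by
    intro x
    rcases le_or_gt x 0 with hx | hx
    · rw [max_eq_right hx, zero_pow (Nat.one_le_iff_ne_zero.mp hm1)]
      positivity
    · rw [max_eq_left hx.le]
      have h1 : (t * x) ^ m / m.factorial ≤ Real.exp (t * x) :=
        Real.pow_div_factorial_le_exp _ (by positivity) m
      rw [div_le_iff₀ (by positivity : (0:ℝ) < (m.factorial : ℝ))] at h1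
      have h2 : x ^ m = (t * x) ^ m / t ^ m := by
        rw [mul_pow]; field_simp
      rw [h2, div_le_iff₀ (by positivity : (0:ℝ) < t ^ m)]
      calc (t * x) ^ m ≤ Real.exp (t * x) * m.factorial := h1
        _ = c * Real.exp (t * x) * t ^ m := by
            rw [hc_def]; field_simp
  -- the independent family including negated interarrival times
  set X : ℕ ⊕ ℕ → Ω → ℝ := Sum.elim L (fun i => -η i) with hX_def
  have hXmeas : ∀ s, Measurable (X s) := by
    rintro (i | i)
    · exact hLmeas i
    · exact (hηmeas i).neg
  have hXindep : iIndepFun X ℙ := by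
    have hg : ∀ s : ℕ ⊕ ℕ,
        Measurable (Sum.elim (fun _ : ℕ => (id : ℝ → ℝ)) (fun _ : ℕ => (fun x : ℝ => -x)) s) := by
      rintro (i | i)
      · exact measurable_id
      · exact measurable_neg
    have h := hindep.comp _ hg
    have hXeq : X = fun s =>
        Sum.elim (fun _ : ℕ => (id : ℝ → ℝ)) (fun _ : ℕ => (fun x : ℝ => -x)) s
          ∘ Sum.elim L η s := by
      funext s; cases s <;> rfl
    rw [hXeq]
    exact h
  set I : Finset ℕ := Finset.Ioc (n - k) n with hI_def
  have hI1 : ∀ i ∈ I, 1 ≤ i := by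
    intro i hi
    rw [hI_def, Finset.mem_Ioc] at hi
    omega
  set S : Finset (ℕ ⊕ ℕ) :=
    insert (Sum.inl (n - k + 1)) (I.map ⟨Sum.inr, Sum.inr_injective⟩) with hS_def
  have hjS : Sum.inl (n - k + 1) ∉ I.map ⟨Sum.inr, Sum.inr_injective⟩ := by simp
  have hZ : ∀ ω, (∑ s ∈ S, X s) ω = L (n - k + 1) ω - ∑ i ∈ I, η i ω := by
    intro ω
    rw [hS_def, Finset.sum_apply, Finset.sum_insert hjS, Finset.sum_map]
    simp only [hX_def, Function.Embedding.coeFn_mk, Sum.elim_inl, Sum.elim_inr, Pi.neg_apply,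
      Finset.sum_neg_distrib]
    ring
  -- integrability of each exponential factor
  have hintL : Integrable (fun ω => Real.exp (t * L (n - k + 1) ω)) ℙ :=
    (aux_exp_moment (hLmeas _) hθ (hLexp _ (Nat.le_add_left 1 (n - k))) htθ).1
  have hint : ∀ s ∈ S, Integrable (fun ω => Real.exp (t * X s ω)) ℙ := by
    intro s hs
    rw [hS_def, Finset.mem_insert] at hs
    rcases hs with hs | hs
    · rw [hs]
      exact hintL
    · rw [Finset.mem_map] at hs
      obtain ⟨i, hi, rfl⟩ := hs
      have h := (aux_exp_moment (hηmeas i) hlam (hηexp i (hI1 i hi))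
        (show -t < lam by linarith)).1
      simp only [Function.Embedding.coeFn_mk, hX_def, Sum.elim_inr, Pi.neg_apply, mul_neg]
      simpa [neg_mul] using h
  have hintZ : Integrable (fun ω => Real.exp (t * (∑ s ∈ S, X s) ω)) ℙ :=
    hXindep.integrable_exp_mul_sum hXmeas hint
  -- the mgf product
  have hmgfL : mgf (X (Sum.inl (n - k + 1))) ℙ t = θ / (θ - t) := by
    have h := (aux_exp_moment (hLmeas _) hθ (hLexp _ (Nat.le_add_left 1 (n - k))) htθ).2
    simpa [mgf, hX_def] using h
  have hmgfη : ∀ i ∈ I, mgf (X (Sum.inr i)) ℙ t = lam / (lam + t) := by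
    intro i hi
    have h := (aux_exp_moment (hηmeas i) hlam (hηexp i (hI1 i hi))
      (show -t < lam by linarith)).2
    rw [sub_neg_eq_add] at h
    simp only [mgf, hX_def, Sum.elim_inr, Pi.neg_apply, mul_neg]
    simpa [neg_mul] using h
  have hprod : ∏ s ∈ S, mgf (X s) ℙ t = (θ / (θ - t)) * (lam / (lam + t)) ^ k := by
    rw [hS_def, Finset.prod_insert hjS, Finset.prod_map, hmgfL]
    congr 1
    rw [Finset.prod_congr rfl (fun i hi => by
      simpa [Function.Embedding.coeFn_mk] using hmgfη i hi)]
    rw [Finset.prod_const, hI_def, Nat.card_Ioc, Nat.sub_sub_self hkn]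
  have hmgf : mgf (∑ s ∈ S, X s) ℙ t = (θ / (θ - t)) * (lam / (lam + t)) ^ k := by
    rw [hXindep.mgf_sum hXmeas S, hprod]
  -- the chain of estimates
  calc ∫⁻ ω, ENNReal.ofReal ((max (L (n - k + 1) ω - ∑ i ∈ I, η i ω) 0) ^ m) ∂ℙ
      = ∫⁻ ω, ENNReal.ofReal ((max ((∑ s ∈ S, X s) ω) 0) ^ m) ∂ℙ :=
        lintegral_congr fun ω => by rw [hZ ω]
    _ ≤ ∫⁻ ω, ENNReal.ofReal (c * Real.exp (t * (∑ s ∈ S, X s) ω)) ∂ℙ :=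
        lintegral_mono fun ω => ENNReal.ofReal_le_ofReal (hkey _)
    _ = ENNReal.ofReal (∫ ω, c * Real.exp (t * (∑ s ∈ S, X s) ω) ∂ℙ) :=
        (MeasureTheory.ofReal_integral_eq_lintegral_ofReal (hintZ.const_mul c)
          (Filter.Eventually.of_forall fun ω => by positivity)).symm
    _ = ENNReal.ofReal (c * (θ / (θ - t)) * (lam / (lam + t)) ^ k) := by
        rw [MeasureTheory.integral_const_mul,
          show (∫ ω, Real.exp (t * (∑ s ∈ S, X s) ω) ∂ℙ) = mgf (∑ s ∈ S, X s) ℙ t from rfl,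
          hmgf, mul_assoc]

/-- With `ξ⁰_n = ∑_{k=1}^n [L_{n−k+1} − (τ_n − τ_{n−k})]_+`, the `L k`
i.i.d. `Exp(θ)` independent of the Poisson arrival process with i.i.d. `Exp(λ)`
interarrival times `η k` (and `τ n = η_1 + … + η_n`), one has
`sup_n E|ξ⁰_n|^p < ∞` for every `p > 0`. -/
theorem statement17
    {Ω : Type*} [MeasureSpace Ω] [IsProbabilityMeasure (ℙ : Measure Ω)]
    (θ lam : ℝ) (hθ : 0 < θ) (hlam : 0 < lam)
    (L : ℕ → Ω → ℝ) (η : ℕ → Ω → ℝ)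
    (hLmeas : ∀ k, Measurable (L k)) (hηmeas : ∀ k, Measurable (η k))
    (hLexp : ∀ k, 1 ≤ k → Measure.map (L k) ℙ = expMeasure θ)
    (hηexp : ∀ k, 1 ≤ k → Measure.map (η k) ℙ = expMeasure lam)
    (hindep : iIndepFun
      (fun p : ℕ ⊕ ℕ => Sum.elim L η p) ℙ)
    (τ : ℕ → Ω → ℝ) (hτ : ∀ n ω, τ n ω = ∑ k ∈ Finset.Icc 1 n, η k ω)
    (ξo : ℕ → Ω → ℝ)
    (hξo : ∀ n ω, ξo n ω =
      ∑ k ∈ Finset.Icc 1 n, max (L (n - k + 1) ω - (τ n ω - τ (n - k) ω)) 0)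
    (p : ℝ) (hp : 0 < p) :
    ∃ C : ℝ, ∀ n : ℕ, ∫ ω, |ξo n ω| ^ p ∂ℙ ≤ C := by
  classical
  -- constants
  set t : ℝ := θ / 2 with ht_def
  have ht : 0 < t := by positivity
  obtain ⟨m, hm1, hpm⟩ : ∃ m : ℕ, 1 ≤ m ∧ p ≤ (m : ℝ) :=
    ⟨max 1 ⌈p⌉₊, le_max_left _ _,
      le_trans (Nat.le_ceil p) (by exact_mod_cast Nat.cast_le.mpr (le_max_right 1 ⌈p⌉₊))⟩
  set q : ℝ := (m : ℝ) with hq_def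
  have hq1 : 1 ≤ q := by rw [hq_def]; exact_mod_cast hm1
  have hq0 : 0 < q := lt_of_lt_of_le one_pos hq1
  set r : ℝ := lam / (lam + t) with hr_def
  have hr0 : 0 ≤ r := by positivity
  have hr1 : r < 1 := by
    rw [hr_def, div_lt_one (by positivity)]
    linarith
  set c : ℝ := (m.factorial : ℝ) / t ^ m with hc_def
  have hθt : 0 < θ - t := by rw [ht_def]; linarith
  have hcθ : 0 ≤ c * (θ / (θ - t)) := by positivity
  set D : ℝ≥0∞ := ENNReal.ofReal (c * (θ / (θ - t))) with hD_def
  set R : ℝ≥0∞ := ENNReal.ofReal r with hR_def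
  have hRlt1 : R < 1 := ENNReal.ofReal_lt_one.mpr hr1
  have hRq1 : R ^ (1 / q) < 1 := ENNReal.rpow_lt_one hRlt1 (by positivity)
  set K : ℝ≥0∞ := D ^ (1 / q) * (1 - R ^ (1 / q))⁻¹ with hK_def
  have hKtop : K ≠ ⊤ := by
    rw [hK_def]
    refine ENNReal.mul_ne_top (ENNReal.rpow_ne_top_of_nonneg (by positivity)
      ENNReal.ofReal_ne_top) ?_
    exact ENNReal.inv_ne_top.mpr (tsub_pos_of_lt hRq1).ne'
  have hKqtop : K ^ q ≠ ⊤ := ENNReal.rpow_ne_top_of_nonneg hq0.le hKtop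
  refine ⟨(1 + K ^ q).toReal, fun n => ?_⟩
  -- measurability
  have hτmeas : ∀ j, Measurable (τ j) := by
    intro j
    rw [funext (hτ j)]
    exact Finset.measurable_sum _ fun i _ => hηmeas i
  have hξmeas : Measurable (ξo n) := by
    rw [funext (hξo n)]
    exact Finset.measurable_sum _ fun k _ =>
      ((hLmeas _).sub ((hτmeas n).sub (hτmeas _))).max measurable_const
  have hξnn : ∀ ω, 0 ≤ ξo n ω := by
    intro ω
    rw [hξo]
    exact Finset.sum_nonneg fun k _ => le_max_right _ _
  -- τ-difference as a sum over Ioc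
  have hIcc : ∀ a : ℕ, Finset.Icc 1 a = Finset.Ioc 0 a := by
    intro a; ext x; simp only [Finset.mem_Icc, Finset.mem_Ioc]; omega
  have hτd : ∀ k ∈ Finset.Icc 1 n, ∀ ω : Ω,
      τ n ω - τ (n - k) ω = ∑ i ∈ Finset.Ioc (n - k) n, η i ω := by
    intro k hk ω
    rw [Finset.mem_Icc] at hk
    have h := Finset.sum_Ioc_consecutive (fun i => η i ω)
      (Nat.zero_le (n - k)) (Nat.sub_le n k)
    rw [hτ, hτ, hIcc, hIcc]
    linarith [h]
  -- the ℝ≥0∞-valued terms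
  set F : ℕ → Ω → ℝ≥0∞ := fun k ω =>
    ENNReal.ofReal (max (L (n - k + 1) ω - (τ n ω - τ (n - k) ω)) 0) with hF_def
  have hFmeas : ∀ k, Measurable (F k) := fun k =>
    (((hLmeas _).sub ((hτmeas n).sub (hτmeas _))).max measurable_const).ennreal_ofReal
  -- per-term bound
  have hterm : ∀ k ∈ Finset.Icc 1 n, ∫⁻ ω, F k ω ^ q ∂ℙ ≤ D * R ^ k := by
    intro k hk
    have hk' := Finset.mem_Icc.mp hk
    have h1 : ∀ ω : Ω, F k ω ^ q = ENNReal.ofReal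
        ((max (L (n - k + 1) ω - ∑ i ∈ Finset.Ioc (n - k) n, η i ω) 0) ^ m) := by
      intro ω
      simp only [hF_def]
      rw [hq_def, ENNReal.rpow_natCast, hτd k hk ω,
        ENNReal.ofReal_pow (le_max_right _ _)]
    calc ∫⁻ ω, F k ω ^ q ∂ℙ
        = ∫⁻ ω, ENNReal.ofReal
            ((max (L (n - k + 1) ω - ∑ i ∈ Finset.Ioc (n - k) n, η i ω) 0) ^ m) ∂ℙ :=
          lintegral_congr h1
      _ ≤ ENNReal.ofReal (c * (θ / (θ - t)) * r ^ k) := by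
          have := aux_term θ lam hθ hlam L η hLmeas hηmeas hLexp hηexp hindep m hm1 n k
            hk'.1 hk'.2
          rw [hc_def, ht_def, hr_def]
          exact this
      _ = D * R ^ k := by
          rw [ENNReal.ofReal_mul hcθ, hD_def, hR_def, ENNReal.ofReal_pow hr0]
  -- Minkowski and geometric series
  have hmink : (∫⁻ ω, (∑ k ∈ Finset.Icc 1 n, F k ω) ^ q ∂ℙ) ^ (1 / q) ≤ K := by
    calc (∫⁻ ω, (∑ k ∈ Finset.Icc 1 n, F k ω) ^ q ∂ℙ) ^ (1 / q)
        ≤ ∑ k ∈ Finset.Icc 1 n, (∫⁻ ω, F k ω ^ q ∂ℙ) ^ (1 / q) :=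
          aux_minkowski ℙ hq1 _ F hFmeas
      _ ≤ ∑ k ∈ Finset.Icc 1 n, D ^ (1 / q) * (R ^ (1 / q)) ^ k := by
          refine Finset.sum_le_sum fun k hk => ?_
          have h2 : (D * R ^ k) ^ (1 / q) = D ^ (1 / q) * (R ^ (1 / q)) ^ k := by
            rw [ENNReal.mul_rpow_of_nonneg _ _ (by positivity), ← ENNReal.rpow_natCast R k,
              ← ENNReal.rpow_mul, mul_comm (k : ℝ) (1 / q), ENNReal.rpow_mul,
              ENNReal.rpow_natCast]
          rw [← h2]
          exact ENNReal.rpow_le_rpow (hterm k hk) (by positivity)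
      _ = D ^ (1 / q) * ∑ k ∈ Finset.Icc 1 n, (R ^ (1 / q)) ^ k := by
          rw [Finset.mul_sum]
      _ ≤ D ^ (1 / q) * ∑' k : ℕ, (R ^ (1 / q)) ^ k := by
          gcongr
          exact ENNReal.sum_le_tsum _
      _ = K := by rw [ENNReal.tsum_geometric, hK_def]
  have hmain : ∫⁻ ω, ENNReal.ofReal (ξo n ω ^ m) ∂ℙ ≤ K ^ q := by
    have hsumF : ∀ ω : Ω, ENNReal.ofReal (ξo n ω ^ m)
        = (∑ k ∈ Finset.Icc 1 n, F k ω) ^ q := by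
      intro ω
      rw [ENNReal.ofReal_pow (hξnn ω), hq_def, ENNReal.rpow_natCast]
      congr 1
      rw [hξo n ω, ENNReal.ofReal_sum_of_nonneg fun k _ => le_max_right _ _]
    rw [lintegral_congr hsumF]
    have h3 : (∫⁻ ω, (∑ k ∈ Finset.Icc 1 n, F k ω) ^ q ∂ℙ)
        = ((∫⁻ ω, (∑ k ∈ Finset.Icc 1 n, F k ω) ^ q ∂ℙ) ^ (1 / q)) ^ q := by
      rw [← ENNReal.rpow_mul, one_div_mul_cancel (ne_of_gt hq0), ENNReal.rpow_one]
    rw [h3]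
    exact ENNReal.rpow_le_rpow hmink hq0.le
  -- pointwise bound for the `p`-th power
  have hpt : ∀ ω : Ω, ENNReal.ofReal (|ξo n ω| ^ p) ≤ 1 + ENNReal.ofReal (ξo n ω ^ m) := by
    intro ω
    have hx := hξnn ω
    have habs : |ξo n ω| = ξo n ω := abs_of_nonneg hx
    have hreal : |ξo n ω| ^ p ≤ 1 + ξo n ω ^ m := by
      rw [habs]
      rcases le_or_gt (ξo n ω) 1 with hx1 | hx1
      · have := Real.rpow_le_one hx hx1 hp.le
        have h0 : (0:ℝ) ≤ ξo n ω ^ m := by positivity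
        linarith
      · have h4 : ξo n ω ^ p ≤ ξo n ω ^ q :=
          Real.rpow_le_rpow_of_exponent_le hx1.le hpm
        rw [hq_def, Real.rpow_natCast] at h4
        linarith
    calc ENNReal.ofReal (|ξo n ω| ^ p) ≤ ENNReal.ofReal (1 + ξo n ω ^ m) :=
          ENNReal.ofReal_le_ofReal hreal
      _ ≤ 1 + ENNReal.ofReal (ξo n ω ^ m) := by
          rw [← ENNReal.ofReal_one]
          exact ENNReal.ofReal_add_le
  -- conclusion
  have hintnn : 0 ≤ᵐ[ℙ] fun ω => |ξo n ω| ^ p :=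
    Filter.Eventually.of_forall fun ω => Real.rpow_nonneg (abs_nonneg _) p
  have hmeasp : Measurable fun ω => |ξo n ω| ^ p := hξmeas.abs.pow measurable_const
  rw [integral_eq_lintegral_of_nonneg_ae hintnn hmeasp.aestronglyMeasurable]
  refine ENNReal.toReal_mono (by rw [ENNReal.add_ne_top]; exact ⟨ENNReal.one_ne_top, hKqtop⟩) ?_
  calc ∫⁻ ω, ENNReal.ofReal (|ξo n ω| ^ p) ∂ℙ
      ≤ ∫⁻ ω, (1 + ENNReal.ofReal (ξo n ω ^ m)) ∂ℙ := lintegral_mono hpt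
    _ = 1 + ∫⁻ ω, ENNReal.ofReal (ξo n ω ^ m) ∂ℙ := by
        rw [lintegral_add_left measurable_const, lintegral_const, measure_univ, mul_one]
    _ ≤ 1 + K ^ q := by gcongr
end

section
/- Suppose V_a (indexed by a real parameter a → ∞) and V are random vectors in R^k such that the family of distributions of V_a is tight and limsup_{a→∞} P(V_a ∈ K) ≤ P(V ∈ K) for every compact rectangle K ⊂ R^k. Then V_a converges in distribution to V as a → ∞. -/
open MeasureTheory ProbabilityTheory Filter Finset

open scoped ENNReal Topology NNReal


open MeasureTheory ProbabilityTheory Filter Finset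

open scoped ENNReal Topology NNReal

namespace Statement19Aux

lemma limsup_add_le' {ι : Type*} {L : Filter ι} (f g : ι → ℝ≥0∞) :
    L.limsup (fun i => f i + g i) ≤ L.limsup f + L.limsup g := by
  rcases eq_top_or_lt_top (L.limsup f) with hf | hf
  · simp [hf]
  rcases eq_top_or_lt_top (L.limsup g) with hg | hg
  · simp [hg]
  refine ENNReal.le_of_forall_pos_le_add fun ε hε _ => ?_
  have hε2 : ((ε/2 : ℝ≥0) : ℝ≥0∞) ≠ 0 := by
    simpa using (half_pos hε).ne'
  have hf' : L.limsup f < L.limsup f + (ε/2 : ℝ≥0) :=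
    ENNReal.lt_add_right hf.ne hε2
  have hg' : L.limsup g < L.limsup g + (ε/2 : ℝ≥0) :=
    ENNReal.lt_add_right hg.ne hε2
  have e1 := eventually_lt_of_limsup_lt hf'
  have e2 := eventually_lt_of_limsup_lt hg'
  refine limsup_le_of_le (by isBoundedDefault) ?_
  filter_upwards [e1, e2] with i h1 h2
  calc f i + g i ≤ (L.limsup f + (ε/2 : ℝ≥0)) + (L.limsup g + (ε/2 : ℝ≥0)) :=
        add_le_add h1.le h2.le
    _ = L.limsup f + L.limsup g + ↑ε := by
        rw [show ((ε : ℝ≥0∞)) = (ε/2 : ℝ≥0) + (ε/2 : ℝ≥0) by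
          rw [← ENNReal.coe_add]; norm_cast; exact (add_halves ε).symm]
        ring

lemma limsup_sum_le {ι κ : Type*} {L : Filter ι} (s : Finset κ) (f : κ → ι → ℝ≥0∞) :
    L.limsup (fun i => ∑ m ∈ s, f m i) ≤ ∑ m ∈ s, L.limsup (f m) := by
  classical
  induction s using Finset.induction_on with
  | empty =>
      simp only [Finset.sum_empty]
      exact limsup_le_of_le (by isBoundedDefault) (Eventually.of_forall fun _ => le_rfl)
  | insert _ _ h ih =>
      simp only [Finset.sum_insert h]
      exact le_trans (limsup_add_le' _ _) (add_le_add le_rfl ih)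

variable {k : ℕ}

/-- There is a grid offset whose grid hyperplanes are ν-null. -/
lemma exists_good_offset (ν : Measure (Fin k → ℝ)) [IsProbabilityMeasure ν]
    {δ : ℝ} (hδ : 0 < δ) :
    ∃ t : ℝ, ∀ j : Fin k, ν {x : Fin k → ℝ | ∃ m : ℤ, x j = t + m * δ} = 0 := by
  classical
  set H : Fin k → ℝ → Set (Fin k → ℝ) :=
    fun j t => {x : Fin k → ℝ | ∃ m : ℤ, x j = t + m * δ} with hH
  have hHmeas : ∀ j t, MeasurableSet (H j t) := by
    intro j t
    have : H j t = ⋃ m : ℤ, (fun x : Fin k → ℝ => x j) ⁻¹' {t + m * δ} := by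
      ext x; simp [hH, Set.mem_iUnion, eq_comm]
    rw [this]
    exact MeasurableSet.iUnion fun m => (measurable_pi_apply j) (measurableSet_singleton _)
  -- bad offsets in [0, δ) form a countable set for each j
  have hbad : ∀ j : Fin k, Set.Countable {t : ℝ | t ∈ Set.Ico 0 δ ∧ 0 < ν (H j t)} := by
    intro j
    set As : {t : ℝ // t ∈ Set.Ico 0 δ} → Set (Fin k → ℝ) := fun t => H j t.1 with hAs
    have hdisj : Pairwise (Function.onFun Disjoint As) := by
      rintro ⟨t, ht⟩ ⟨t', ht'⟩ hne
      refine Set.disjoint_left.mpr ?_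
      rintro x ⟨m, hm⟩ ⟨m', hm'⟩
      have h1 : t - t' = (m' - m) * δ := by push_cast; linarith [hm, hm']
      have h2 : |t - t'| < δ := by
        rw [abs_lt]; constructor <;> [linarith [ht.1, ht.2, ht'.1, ht'.2];
          linarith [ht.1, ht.2, ht'.1, ht'.2]]
      have h3 : t ≠ t' := by
        intro h; apply hne; exact Subtype.ext h
      have hmm : m' ≠ m := by
        intro h0
        subst h0
        exact h3 (by linarith)
      have h4 : (1 : ℝ) ≤ |(m' : ℝ) - (m : ℝ)| := by
        have h5 : (1 : ℤ) ≤ |m' - m| := Int.one_le_abs (sub_ne_zero.mpr hmm)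
        have h6 : ((|m' - m| : ℤ) : ℝ) = |(m' : ℝ) - (m : ℝ)| := by push_cast; ring_nf
        exact_mod_cast h6 ▸ (by exact_mod_cast h5 : (1:ℝ) ≤ ((|m' - m| : ℤ) : ℝ))
      rw [h1, abs_mul, abs_of_pos hδ] at h2
      nlinarith [abs_nonneg ((m' : ℝ) - (m : ℝ))]
    have hcnt : Set.Countable {i : {t : ℝ // t ∈ Set.Ico 0 δ} | 0 < ν (As i)} :=
      MeasureTheory.Measure.countable_meas_pos_of_disjoint_of_meas_iUnion_ne_top ν
        (fun i => hHmeas j i.1) hdisj (measure_ne_top ν _)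
    have : {t : ℝ | t ∈ Set.Ico 0 δ ∧ 0 < ν (H j t)}
        ⊆ Subtype.val '' {i : {t : ℝ // t ∈ Set.Ico 0 δ} | 0 < ν (As i)} := by
      rintro t ⟨ht, hpos⟩
      exact ⟨⟨t, ht⟩, hpos, rfl⟩
    exact (hcnt.image _).mono this
  -- the union of bad sets is countable; Ico 0 δ is not (positive volume)
  have hb : Set.Countable (⋃ j : Fin k, {t : ℝ | t ∈ Set.Ico 0 δ ∧ 0 < ν (H j t)}) :=
    Set.countable_iUnion hbad
  have hIco : ¬ (Set.Ico (0:ℝ) δ ⊆ ⋃ j : Fin k, {t : ℝ | t ∈ Set.Ico 0 δ ∧ 0 < ν (H j t)}) := by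
    intro hsub
    have h1 : (volume (Set.Ico (0:ℝ) δ)) = 0 :=
      measure_mono_null hsub (hb.measure_zero volume)
    rw [Real.volume_Ico] at h1
    simp only [sub_zero] at h1
    exact (ENNReal.ofReal_pos.mpr hδ).ne' h1
  rw [Set.not_subset] at hIco
  obtain ⟨t, htmem, htgood⟩ := hIco
  refine ⟨t, fun j => ?_⟩
  by_contra hpos
  exact htgood (Set.mem_iUnion.mpr ⟨j, htmem, pos_iff_ne_zero.mpr hpos⟩)

lemma limsup_compact_le_thickening {ι : Type*} {L : Filter ι}
    (μs : ι → Measure (Fin k → ℝ)) [∀ i, IsProbabilityMeasure (μs i)]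
    (ν : Measure (Fin k → ℝ)) [IsProbabilityMeasure ν]
    (hrect : ∀ r s : Fin k → ℝ, L.limsup (fun i => μs i (Set.Icc r s)) ≤ ν (Set.Icc r s))
    {C : Set (Fin k → ℝ)} (hC : IsCompact C) {δ : ℝ} (hδ : 0 < δ) :
    L.limsup (fun i => μs i C) ≤ ν (Metric.cthickening δ C) := by
  classical
  obtain ⟨t, ht⟩ := exists_good_offset ν hδ
  set cube : (Fin k → ℤ) → Set (Fin k → ℝ) :=
    fun m => Set.Icc (fun j => t + m j * δ) (fun j => t + (m j + 1) * δ) with hcube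
  have cube_mem : ∀ (m : Fin k → ℤ) (x : Fin k → ℝ),
      x ∈ cube m ↔ ∀ j, t + m j * δ ≤ x j ∧ x j ≤ t + (m j + 1) * δ := by
    intro m x
    simp only [hcube, Set.mem_Icc, Pi.le_def]
    exact ⟨fun ⟨h1, h2⟩ j => ⟨h1 j, h2 j⟩, fun h => ⟨fun j => (h j).1, fun j => (h j).2⟩⟩
  set idx : (Fin k → ℝ) → (Fin k → ℤ) := fun x j => ⌊(x j - t) / δ⌋ with hidx
  have mem_idx : ∀ x : Fin k → ℝ, x ∈ cube (idx x) := by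
    intro x
    rw [cube_mem]
    intro j
    constructor
    · have h1 : (⌊(x j - t) / δ⌋ : ℝ) ≤ (x j - t) / δ := Int.floor_le _
      have h2 := mul_le_mul_of_nonneg_right h1 hδ.le
      rw [div_mul_cancel₀ _ hδ.ne'] at h2
      simp only [hidx]; linarith
    · have h1 : (x j - t) / δ < ⌊(x j - t) / δ⌋ + 1 := Int.lt_floor_add_one _
      have h2 := mul_le_mul_of_nonneg_right h1.le hδ.le
      rw [div_mul_cancel₀ _ hδ.ne'] at h2
      simp only [hidx]; push_cast; linarith
  obtain ⟨r, hr⟩ := hC.isBounded.subset_closedBall 0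
  set lo : ℤ := ⌊(-r - t) / δ⌋ with hlo
  set hi : ℤ := ⌊(r - t) / δ⌋ with hhi
  have idx_bound : ∀ x ∈ C, ∀ j, lo ≤ idx x j ∧ idx x j ≤ hi := by
    intro x hx j
    have hxj : |x j| ≤ r := by
      have h0 := hr hx
      rw [Metric.mem_closedBall] at h0
      have h1 := dist_le_pi_dist x 0 j
      simpa [Real.dist_eq] using h1.trans h0
    rw [abs_le] at hxj
    constructor
    · refine Int.floor_le_floor ?_
      apply div_le_div_of_nonneg_right ?_ hδ.le |>.trans le_rfl
      linarith [hxj.1]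
    · refine Int.floor_le_floor ?_
      apply div_le_div_of_nonneg_right ?_ hδ.le |>.trans le_rfl
      linarith [hxj.2]
  set S : Finset (Fin k → ℤ) :=
    (Fintype.piFinset fun _ : Fin k => Finset.Icc lo hi).filter
      (fun m => (cube m ∩ C).Nonempty) with hS
  have cover : C ⊆ ⋃ m ∈ S, cube m := by
    intro x hx
    have hmem : idx x ∈ S := by
      rw [hS, Finset.mem_filter, Fintype.mem_piFinset]
      exact ⟨fun j => Finset.mem_Icc.mpr (idx_bound x hx j), ⟨x, mem_idx x, hx⟩⟩
    exact Set.mem_biUnion hmem (mem_idx x)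
  have cubes_sub : ∀ m ∈ S, cube m ⊆ Metric.cthickening δ C := by
    intro m hm z hz
    rw [hS, Finset.mem_filter] at hm
    obtain ⟨y, hy_cube, hyC⟩ := hm.2
    have hdist : dist z y ≤ δ := by
      rw [dist_pi_le_iff hδ.le]
      intro j
      rw [cube_mem] at hz hy_cube
      have h1 := hz j; have h2 := hy_cube j
      rw [Real.dist_eq, abs_le]
      exact ⟨by linarith [h1.1, h1.2, h2.1, h2.2], by linarith [h1.1, h1.2, h2.1, h2.2]⟩
    exact Metric.mem_cthickening_of_dist_le z y δ C hyC hdist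
  have cube_null_inter : ∀ m m' : Fin k → ℤ, m ≠ m' → ν (cube m ∩ cube m') = 0 := by
    intro m m' hne
    have hsub : cube m ∩ cube m' ⊆
        ⋃ j : Fin k, {x : Fin k → ℝ | ∃ mm : ℤ, x j = t + mm * δ} := by
      rintro x ⟨hx1, hx2⟩
      obtain ⟨j, hj⟩ := Function.ne_iff.mp hne
      rw [cube_mem] at hx1 hx2
      rcases lt_or_gt_of_ne hj with h | h
      · refine Set.mem_iUnion.mpr ⟨j, ⟨m j + 1, ?_⟩⟩
        have h1 : (m j : ℝ) + 1 ≤ (m' j : ℝ) := by exact_mod_cast h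
        have ha := (hx1 j).2
        have hb := (hx2 j).1
        have hc : ((m j : ℝ) + 1) * δ ≤ (m' j : ℝ) * δ := mul_le_mul_of_nonneg_right h1 hδ.le
        push_cast
        linarith
      · refine Set.mem_iUnion.mpr ⟨j, ⟨m' j + 1, ?_⟩⟩
        have h1 : (m' j : ℝ) + 1 ≤ (m j : ℝ) := by exact_mod_cast h
        have ha := (hx2 j).2
        have hb := (hx1 j).1
        have hc : ((m' j : ℝ) + 1) * δ ≤ (m j : ℝ) * δ := mul_le_mul_of_nonneg_right h1 hδ.le
        push_cast
        linarith
    exact measure_mono_null hsub (measure_iUnion_null fun j => ht j)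
  have hnull_pair : (↑S : Set (Fin k → ℤ)).Pairwise (Function.onFun (MeasureTheory.AEDisjoint ν) cube) :=
    fun m _ m' _ hne => cube_null_inter m m' hne
  have hsum_eq : ν (⋃ m ∈ S, cube m) = ∑ m ∈ S, ν (cube m) :=
    measure_biUnion_finset₀ hnull_pair (fun m _ => measurableSet_Icc.nullMeasurableSet)
  calc L.limsup (fun i => μs i C)
      ≤ L.limsup (fun i => μs i (⋃ m ∈ S, cube m)) :=
        limsup_le_limsup (Eventually.of_forall fun i => measure_mono cover)
    _ ≤ L.limsup (fun i => ∑ m ∈ S, μs i (cube m)) :=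
        limsup_le_limsup (Eventually.of_forall fun i => measure_biUnion_finset_le _ _)
    _ ≤ ∑ m ∈ S, L.limsup (fun i => μs i (cube m)) := limsup_sum_le S _
    _ ≤ ∑ m ∈ S, ν (cube m) := Finset.sum_le_sum fun m _ => hrect _ _
    _ = ν (⋃ m ∈ S, cube m) := hsum_eq.symm
    _ ≤ ν (Metric.cthickening δ C) := measure_mono (Set.iUnion₂_subset cubes_sub)

lemma limsup_compact_le {ι : Type*} {L : Filter ι}
    (μs : ι → Measure (Fin k → ℝ)) [∀ i, IsProbabilityMeasure (μs i)]
    (ν : Measure (Fin k → ℝ)) [IsProbabilityMeasure ν]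
    (hrect : ∀ r s : Fin k → ℝ, L.limsup (fun i => μs i (Set.Icc r s)) ≤ ν (Set.Icc r s))
    {C : Set (Fin k → ℝ)} (hC : IsCompact C) :
    L.limsup (fun i => μs i C) ≤ ν C := by
  refine ENNReal.le_of_forall_pos_le_add fun ε hε _ => ?_
  have h1 : Tendsto (fun dd : ℝ => ν (Metric.cthickening dd C)) (𝓝[>] 0) (𝓝 (ν C)) :=
    (tendsto_measure_cthickening_of_isClosed ⟨1, one_pos, measure_ne_top ν _⟩
      hC.isClosed).mono_left nhdsWithin_le_nhds
  have hlt : ν C < ν C + ε :=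
    ENNReal.lt_add_right (measure_ne_top ν C) (by exact_mod_cast hε.ne')
  have h2 : ∀ᶠ dd in 𝓝[>] (0:ℝ), ν (Metric.cthickening dd C) < ν C + ε :=
    h1.eventually_lt_const hlt
  obtain ⟨dd, hdd1, hdd2⟩ := (h2.and self_mem_nhdsWithin).exists
  exact (limsup_compact_le_thickening μs ν hrect hC hdd2).trans hdd1.le

lemma limsup_closed_le {ι : Type*} {L : Filter ι}
    (μs : ι → Measure (Fin k → ℝ)) [∀ i, IsProbabilityMeasure (μs i)]
    (ν : Measure (Fin k → ℝ)) [IsProbabilityMeasure ν]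
    (hrect : ∀ r s : Fin k → ℝ, L.limsup (fun i => μs i (Set.Icc r s)) ≤ ν (Set.Icc r s))
    (htight : ∀ ε : ℝ, 0 < ε → ∃ C : Set (Fin k → ℝ), IsCompact C ∧
      ∀ i, μs i Cᶜ ≤ ENNReal.ofReal ε)
    {F : Set (Fin k → ℝ)} (hF : IsClosed F) :
    L.limsup (fun i => μs i F) ≤ ν F := by
  refine ENNReal.le_of_forall_pos_le_add fun ε hε _ => ?_
  obtain ⟨C, hC, hCb⟩ := htight ε (by exact_mod_cast hε)
  have key : ∀ i, μs i F ≤ μs i (F ∩ C) + μs i Cᶜ := fun i => calc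
    μs i F ≤ μs i ((F ∩ C) ∪ Cᶜ) := measure_mono (fun x hx => by
      by_cases hxC : x ∈ C
      · exact Or.inl ⟨hx, hxC⟩
      · exact Or.inr hxC)
    _ ≤ _ := measure_union_le _ _
  calc L.limsup (fun i => μs i F)
      ≤ L.limsup (fun i => μs i (F ∩ C) + μs i Cᶜ) :=
        limsup_le_limsup (Eventually.of_forall key)
    _ ≤ L.limsup (fun i => μs i (F ∩ C)) + L.limsup (fun i => μs i Cᶜ) := limsup_add_le' _ _
    _ ≤ ν (F ∩ C) + ENNReal.ofReal ε :=
        add_le_add (limsup_compact_le μs ν hrect (hC.inter_left hF))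
          (limsup_le_of_le (by isBoundedDefault) (Eventually.of_forall hCb))
    _ ≤ ν F + ε := by
        rw [ENNReal.ofReal_coe_nnreal]
        exact add_le_add (measure_mono Set.inter_subset_left) le_rfl

end Statement19Aux

/-- If the random vectors `V a` (indexed by `a → ∞`) are tight and
`limsup_{a→∞} P(V_a ∈ K) ≤ P(V ∈ K)` for every compact rectangle
`K = [r 1, s 1] × … × [r k, s k]`, then `V a` converges in distribution to `V`. -/
theorem statement19
    {Ω : Type*} [MeasureSpace Ω] [IsProbabilityMeasure (ℙ : Measure Ω)]
    {k : ℕ} (V : ℝ → Ω → (Fin k → ℝ)) (Vlim : Ω → (Fin k → ℝ))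
    (hVmeas : ∀ a, Measurable (V a)) (hVlimmeas : Measurable Vlim)
    (htight : ∀ ε : ℝ, 0 < ε → ∃ C : Set (Fin k → ℝ), IsCompact C ∧
      ∀ a : ℝ, 1 - ε ≤ (ℙ {ω | V a ω ∈ C}).toReal)
    (hlimsup : ∀ r s : Fin k → ℝ,
      Filter.limsup (fun a : ℝ => (ℙ {ω | V a ω ∈ Set.Icc r s}).toReal) atTop ≤
        (ℙ {ω | Vlim ω ∈ Set.Icc r s}).toReal) :
    ∀ f : BoundedContinuousFunction (Fin k → ℝ) ℝ,
      Tendsto (fun a : ℝ => ∫ ω, f (V a ω) ∂ℙ) atTop (nhds (∫ ω, f (Vlim ω) ∂ℙ)) := by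
  intro f
  classical
  set μs : ℝ → Measure (Fin k → ℝ) := fun a => Measure.map (V a) ℙ with hμs
  set ν : Measure (Fin k → ℝ) := Measure.map Vlim ℙ with hν
  haveI hPμ : ∀ a, IsProbabilityMeasure (μs a) := fun a =>
    Measure.isProbabilityMeasure_map (hVmeas a).aemeasurable
  haveI hPν : IsProbabilityMeasure ν := Measure.isProbabilityMeasure_map hVlimmeas.aemeasurable
  have hrect : ∀ r s : Fin k → ℝ,
      Filter.limsup (fun a : ℝ => μs a (Set.Icc r s)) atTop ≤ ν (Set.Icc r s) := by
    intro r s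
    have hmap : ∀ a, μs a (Set.Icc r s) = ℙ {ω | V a ω ∈ Set.Icc r s} := fun a =>
      Measure.map_apply (hVmeas a) measurableSet_Icc
    have hmapν : ν (Set.Icc r s) = ℙ {ω | Vlim ω ∈ Set.Icc r s} :=
      Measure.map_apply hVlimmeas measurableSet_Icc
    refine ENNReal.le_of_forall_pos_le_add fun ε hε _ => ?_
    have hbdd : IsBoundedUnder (· ≤ ·) atTop
        (fun a : ℝ => (ℙ {ω | V a ω ∈ Set.Icc r s}).toReal) :=
      isBoundedUnder_of ⟨1, fun a => by
        have hh : (ℙ {ω | V a ω ∈ Set.Icc r s}).toReal ≤ (1 : ℝ≥0∞).toReal :=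
          ENNReal.toReal_mono ENNReal.one_ne_top prob_le_one
        simpa using hh⟩
    have hε' : (0:ℝ) < ε := hε
    have hlt : Filter.limsup (fun a : ℝ => (ℙ {ω | V a ω ∈ Set.Icc r s}).toReal) atTop
        < (ℙ {ω | Vlim ω ∈ Set.Icc r s}).toReal + ε := by
      have h0 := hlimsup r s
      linarith
    have hev := eventually_lt_of_limsup_lt hlt hbdd
    refine limsup_le_of_le (by isBoundedDefault) ?_
    filter_upwards [hev] with a ha
    rw [hmap a, hmapν]
    have h1 : ℙ {ω | V a ω ∈ Set.Icc r s} ≤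
        ENNReal.ofReal ((ℙ {ω | Vlim ω ∈ Set.Icc r s}).toReal + ε) :=
      (ENNReal.le_ofReal_iff_toReal_le (measure_ne_top _ _)
        (by positivity)).mpr ha.le
    refine h1.trans ?_
    rw [ENNReal.ofReal_add ENNReal.toReal_nonneg (by positivity),
      ENNReal.ofReal_toReal (measure_ne_top _ _), ENNReal.ofReal_coe_nnreal]
  have htight' : ∀ ε : ℝ, 0 < ε → ∃ C : Set (Fin k → ℝ), IsCompact C ∧
      ∀ a, μs a Cᶜ ≤ ENNReal.ofReal ε := by
    intro ε hε
    obtain ⟨C, hC, hCb⟩ := htight ε hε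
    refine ⟨C, hC, fun a => ?_⟩
    have hCm : MeasurableSet C := hC.isClosed.measurableSet
    have h1 : μs a C = ℙ {ω | V a ω ∈ C} := Measure.map_apply (hVmeas a) hCm
    have h2 : μs a Cᶜ = 1 - μs a C := prob_compl_eq_one_sub hCm
    rw [ENNReal.le_ofReal_iff_toReal_le (measure_ne_top _ _) hε.le, h2,
      ENNReal.toReal_sub_of_le prob_le_one ENNReal.one_ne_top]
    have h3 := hCb a
    rw [← h1] at h3
    simp only [ENNReal.toReal_one]
    linarith
  have hclosed : ∀ F : Set (Fin k → ℝ), IsClosed F →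
      Filter.limsup (fun a : ℝ => μs a F) atTop ≤ ν F :=
    fun F hF => Statement19Aux.limsup_closed_le μs ν hrect htight' hF
  have hint : ∀ a, ∫ ω, f (V a ω) ∂ℙ = ∫ y, f y ∂(μs a) := fun a =>
    (integral_map (hVmeas a).aemeasurable f.continuous.aestronglyMeasurable).symm
  have hintl : ∫ ω, f (Vlim ω) ∂ℙ = ∫ y, f y ∂ν :=
    (integral_map hVlimmeas.aemeasurable f.continuous.aestronglyMeasurable).symm
  simp only [hint, hintl]
  rw [tendsto_iff_seq_tendsto]
  intro x hx
  set P : ℕ → ProbabilityMeasure (Fin k → ℝ) := fun n => ⟨μs (x n), hPμ (x n)⟩ with hP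
  set Pl : ProbabilityMeasure (Fin k → ℝ) := ⟨ν, hPν⟩ with hPl
  have h_opens : ∀ G, IsOpen G → Pl G ≤ atTop.liminf (fun n => P n G) := by
    intro G hG
    have hcl : Filter.limsup (fun n => μs (x n) Gᶜ) atTop ≤ ν Gᶜ := by
      have h1 : Filter.limsup (fun n => μs (x n) Gᶜ) atTop
          = Filter.limsup (fun a => μs a Gᶜ) (Filter.map x atTop) := rfl
      rw [h1]
      exact le_trans (limsup_le_limsup_of_le hx) (hclosed Gᶜ hG.isClosed_compl)
    have h2 : ν G ≤ atTop.liminf (fun n => μs (x n) G) :=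
      le_measure_liminf_of_limsup_measure_compl_le hG.measurableSet hcl
    have aux : (↑(atTop.liminf (fun n => P n G)) : ℝ≥0∞)
        = atTop.liminf (fun n => ((P n G : ℝ≥0) : ℝ≥0∞)) := by
      refine Monotone.map_liminf_of_continuousAt (F := atTop) ENNReal.coe_mono
        (fun n => P n G) ENNReal.continuous_coe.continuousAt ?_ ?_
      · exact IsBoundedUnder.isCoboundedUnder_ge ⟨1, by
          simp only [eventually_map, eventually_atTop]
          exact ⟨0, fun n _ => ProbabilityMeasure.apply_le_one _ _⟩⟩
      · exact ⟨0, by simp⟩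
    rw [← ENNReal.coe_le_coe, aux]
    have hc1 : atTop.liminf (fun n => ((P n G : ℝ≥0) : ℝ≥0∞))
        = atTop.liminf (fun n => μs (x n) G) := by
      simp only [ProbabilityMeasure.ennreal_coeFn_eq_coeFn_toMeasure]
      rfl
    have hc2 : ((Pl G : ℝ≥0) : ℝ≥0∞) = ν G := by
      rw [ProbabilityMeasure.ennreal_coeFn_eq_coeFn_toMeasure]; rfl
    rw [hc1, hc2]
    exact h2
  have key : Tendsto P atTop (𝓝 Pl) := MeasureTheory.tendsto_of_forall_isOpen_le_liminf h_opens
  exact ProbabilityMeasure.tendsto_iff_forall_integral_tendsto.mp key f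
end
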